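/- arXiv:math/0308061 — 6 statements merged into one kernel-verified Lean document; each statement's English description precedes it below -/
import Mathlib

section
/- For every integer n ≥ 0 and every integer j with 0 ≤ j ≤ n/3, the number of partitions of n whose parts of even index sum to j equals Σ_{i=0}^{j} p(i)·p(j−i), where p denotes the ordinary partition function. -/
/-- `p(n)`: the number of partitions of `n`. -/
noncomputable def partitionCount (n : ℕ) : ℕ := Fintype.card (Nat.Partition n)

/-- The parts of a partition, listed in weakly decreasing order
(so that the `j`-th entry, `1`-based, is `a_j`). -/
def sortedParts {n : ℕ} (lam : Nat.Partition n) : List ℕ :=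
  lam.parts.sort (· ≥ ·)

/-- The sum of the parts of even index `a_2 + a_4 + a_6 + ⋯` of a partition. -/
def evenIndexSum {n : ℕ} (lam : Nat.Partition n) : ℕ :=
  ∑ j ∈ Finset.range (sortedParts lam).length,
    if (j + 1) % 2 = 0 then (sortedParts lam).getD j 0 else 0

/-- `f(n,j)`: the number of partitions of `n` whose parts of even index sum to `j`. -/
noncomputable def f (n j : ℕ) : ℕ :=
  (Finset.univ.filter (fun lam : Nat.Partition n => evenIndexSum lam = j)).card

open Finset Multiset



/-- Sum of `getD` over the range of the length equals list sum. -/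
lemma aux_sum_getD (L : List ℕ) : ∑ t ∈ Finset.range L.length, L.getD t 0 = L.sum := by
  induction L with
  | nil => simp
  | cons x L ih =>
    rw [List.length_cons, Finset.sum_range_succ', List.sum_cons]
    simp only [List.getD_cons_succ, List.getD_cons_zero]
    rw [ih]; ring

lemma aux_anti_getD {L : List ℕ} (hL : L.Pairwise (· ≥ ·)) : Antitone (fun t => L.getD t 0) := by
  apply antitone_nat_of_succ_le
  intro t
  by_cases h : t + 1 < L.length
  · rw [List.getD_eq_getElem _ _ h, List.getD_eq_getElem _ _ (by omega)]
    exact List.Pairwise.rel_get_of_lt hL (by simp)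
  · rw [List.getD_eq_default _ _ (by omega)]
    exact Nat.zero_le _

lemma aux_tele (a : ℕ → ℕ) (ha : Antitone a) :
    ∀ b t, t ≤ b → ∑ k ∈ Finset.Ico (t+1) (b+1), (a (k-1) - a k) = a t - a b := by
  intro b
  induction b with
  | zero => intro t ht; interval_cases t; simp
  | succ b ih =>
    intro t ht
    rcases Nat.eq_or_lt_of_le ht with rfl | h
    · simp
    · have ht' : t ≤ b := by omega
      rw [Finset.sum_Ico_succ_top (by omega), ih t ht']
      have h1 := ha ht'
      have h2 := ha (show b ≤ b+1 by omega)
      simp only [Nat.add_sub_cancel]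
      omega


section abel
variable (a : ℕ → ℕ)

/-- Abel-type summation for the odd-position sum. -/
lemma aux_oddsum (ha : Antitone a) (M : ℕ) :
    ∑ v ∈ Finset.Icc 1 M, v * (a (2*v-1) - a (2*v+1)) + M * a (2*M+1)
      = ∑ t ∈ Finset.range (2*M), (if (t+1) % 2 = 0 then a t else 0) := by
  induction M with
  | zero => simp
  | succ M ih =>
    have e1 : 2*(M+1) = 2*M + 1 + 1 := by ring
    rw [Finset.sum_Icc_succ_top (by omega), e1, Finset.sum_range_succ, Finset.sum_range_succ,
      if_neg (by omega), if_pos (by omega),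
      show 2*M+1+1-1 = 2*M+1 by omega, show 2*M+1+1+1 = 2*M+3 by omega, ← ih]
    have h1 : a (2*M+3) ≤ a (2*M+1) := ha (by omega)
    set x := a (2*M+1)
    set y := a (2*M+3)
    zify [h1]
    ring

/-- Abel-type summation for the total sum. -/
lemma aux_totsum (ha : Antitone a) (M : ℕ) :
    (a 0 - a 1) + ∑ v ∈ Finset.Icc 1 M,
        (2*v * (a (2*v-1) - a (2*v)) + (2*v+1) * (a (2*v) - a (2*v+1)))
      + (2*M+1) * a (2*M+1) = ∑ t ∈ Finset.range (2*M+1), a t := by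
  induction M with
  | zero =>
    have h1 : a 1 ≤ a 0 := ha (by omega)
    simp [Finset.sum_range_succ]
    omega
  | succ M ih =>
    rw [Finset.sum_Icc_succ_top (by omega),
      show 2*(M+1)-1 = 2*M+1 by omega, show 2*(M+1) = 2*M+2 by ring,
      Finset.sum_range_succ, show 2*M+2 = 2*M+1+1 by omega,
      Finset.sum_range_succ, ← ih]
    have h1 : a (2*M+1+1) ≤ a (2*M+1) := ha (by omega)
    have h2 : a (2*M+1+1+1) ≤ a (2*M+1+1) := ha (by omega)
    set x := a (2*M+1)
    set y := a (2*M+1+1)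
    set z := a (2*M+1+1+1)
    zify [h1, h2]
    ring

end abel

lemma aux_split (F : ℕ → ℕ) (M : ℕ) :
    ∑ k ∈ Finset.range (2*M+2), F k
      = F 0 + F 1 + ∑ v ∈ Finset.Icc 1 M, (F (2*v) + F (2*v+1)) := by
  induction M with
  | zero => simp [Finset.sum_range_succ]
  | succ M ih =>
    rw [show 2*(M+1)+2 = (2*M+2)+1+1 by ring, Finset.sum_range_succ, Finset.sum_range_succ, ih,
      Finset.sum_Icc_succ_top (by omega), show 2*(M+1) = 2*M+2 by ring,
      show 2*M+2+1 = 2*M+3 by omega]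
    ring

lemma aux_msum (s : Finset ℕ) (g : ℕ → Multiset ℕ) : (∑ v ∈ s, g v).sum = ∑ v ∈ s, (g v).sum := by
  induction s using Finset.induction_on with
  | empty => simp
  | insert _ _ ha ih => simp [Finset.sum_insert ha, ih]

lemma aux_mcard (s : Finset ℕ) (g : ℕ → Multiset ℕ) :
    Multiset.card (∑ v ∈ s, g v) = ∑ v ∈ s, Multiset.card (g v) := by
  induction s using Finset.induction_on with
  | empty => simp
  | insert _ _ ha ih => simp [Finset.sum_insert ha, ih]

lemma aux_cnt3 (s : Multiset ℕ) (M : ℕ) (hs : ∀ x ∈ s, x ∈ Finset.Icc 1 M) :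
    ∑ v ∈ Finset.Icc 1 M, Multiset.replicate (Multiset.count v s) v = s := by
  classical
  calc ∑ v ∈ Finset.Icc 1 M, Multiset.replicate (Multiset.count v s) v
      = ∑ v ∈ Finset.Icc 1 M, Multiset.count v s • ({v} : Multiset ℕ) := by
        exact Finset.sum_congr rfl (fun v _ => by rw [Multiset.nsmul_singleton])
    _ = ∑ v ∈ s.toFinset, Multiset.count v s • ({v} : Multiset ℕ) := by
        refine (Finset.sum_subset (fun x hx => hs x (Multiset.mem_toFinset.mp hx)) ?_).symm
        intro x _ hnx
        rw [Multiset.count_eq_zero_of_notMem (by simpa using hnx)]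
        simp
    _ = s := Multiset.toFinset_sum_count_nsmul_eq s

lemma aux_cnt_sum (s : Multiset ℕ) (M : ℕ) (hs : ∀ x ∈ s, x ∈ Finset.Icc 1 M) :
    ∑ v ∈ Finset.Icc 1 M, Multiset.count v s * v = s.sum := by
  have := congrArg Multiset.sum (aux_cnt3 s M hs)
  rw [aux_msum] at this
  simpa [Multiset.sum_replicate, smul_eq_mul] using this

lemma aux_cnt_card (s : Multiset ℕ) (M : ℕ) (hs : ∀ x ∈ s, x ∈ Finset.Icc 1 M) :
    ∑ v ∈ Finset.Icc 1 M, Multiset.count v s = Multiset.card s := by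
  have := congrArg Multiset.card (aux_cnt3 s M hs)
  rw [aux_mcard] at this
  simpa using this


lemma aux_prefix (a : ℕ → ℕ) (ha : Antitone a) (N : ℕ) (hN : a N = 0) :
    ∃ m, m ≤ N ∧ (∀ t, t < m → a t ≠ 0) ∧ ∀ t, m ≤ t → a t = 0 := by
  classical
  have hex : ∃ m, a m = 0 := ⟨N, hN⟩
  refine ⟨Nat.find hex, Nat.find_le hN, fun t ht => Nat.find_min hex ht, fun t ht => ?_⟩
  have h1 : a t ≤ a (Nat.find hex) := ha ht
  have h2 := Nat.find_spec hex
  omega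

lemma aux_filter_map_range (a : ℕ → ℕ) (N m : ℕ) (hm : m ≤ N)
    (h1 : ∀ t, t < m → a t ≠ 0) (h2 : ∀ t, m ≤ t → a t = 0) :
    ((List.range N).map a).filter (· ≠ 0) = (List.range m).map a := by
  rw [show N = m + (N - m) by omega, List.range_add, List.map_append, List.filter_append]
  rw [List.filter_eq_self.2, List.filter_eq_nil_iff.2, List.append_nil]
  · intro x hx
    simp only [List.mem_map, List.mem_range] at hx
    obtain ⟨u, ⟨t, ht, rfl⟩, rfl⟩ := hx
    simpa using h2 (m + t) (by omega)
  · intro x hx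
    simp only [List.mem_map, List.mem_range] at hx
    obtain ⟨t, ht, rfl⟩ := hx
    simpa using h1 t ht

lemma aux_sorted_map_range (a : ℕ → ℕ) (ha : Antitone a) (N : ℕ) :
    ((List.range N).map a).Pairwise (· ≥ ·) :=
  List.Pairwise.map _ (fun _ _ h => ha (le_of_lt h)) (List.pairwise_lt_range (n := N))

lemma aux_sort_coe (L : List ℕ) (hL : L.Pairwise (· ≥ ·)) :
    Multiset.sort (↑L : Multiset ℕ) (· ≥ ·) = L :=
  List.Perm.eq_of_pairwise' (Multiset.pairwise_sort _ _) hL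
    (Multiset.coe_eq_coe.mp (Multiset.sort_eq _ _))


/- ====== partition-level layer ====== -/

section PartLayer
variable {n : ℕ}

def aF {n : ℕ} (lam : Nat.Partition n) : ℕ → ℕ := fun t => (sortedParts lam).getD t 0

def dF {n : ℕ} (lam : Nat.Partition n) : ℕ → ℕ := fun k => aF lam (k-1) - aF lam k

lemma sortedParts_sorted (lam : Nat.Partition n) : (sortedParts lam).Pairwise (· ≥ ·) :=
  Multiset.pairwise_sort _ _

lemma aF_anti (lam : Nat.Partition n) : Antitone (aF lam) :=
  aux_anti_getD (sortedParts_sorted lam)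

lemma length_sortedParts_le (lam : Nat.Partition n) : (sortedParts lam).length ≤ n := by
  rw [sortedParts, Multiset.length_sort]
  have := Multiset.card_nsmul_le_sum (s := lam.parts) (a := 1)
    (fun x hx => lam.parts_pos hx)
  simpa [lam.parts_sum] using this

lemma aF_eq_zero (lam : Nat.Partition n) {t : ℕ} (ht : (sortedParts lam).length ≤ t) :
    aF lam t = 0 :=
  List.getD_eq_default _ _ ht

lemma aF_ne_zero (lam : Nat.Partition n) {t : ℕ} (ht : t < (sortedParts lam).length) :
    aF lam t ≠ 0 := by
  have hmem : (sortedParts lam).getD t 0 ∈ sortedParts lam := by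
    rw [List.getD_eq_getElem _ _ ht]; exact List.getElem_mem _
  have := lam.parts_pos ((Multiset.mem_sort _).mp hmem)
  simp only [aF]; omega

lemma length_le_of_aF_zero (lam : Nat.Partition n) {T : ℕ} (hT : aF lam T = 0) :
    (sortedParts lam).length ≤ T := by
  by_contra h
  exact aF_ne_zero lam (by omega) hT

lemma sum_aF (lam : Nat.Partition n) {T : ℕ} (hT : (sortedParts lam).length ≤ T) :
    ∑ t ∈ Finset.range T, aF lam t = n := by
  rw [← Finset.sum_subset (Finset.range_subset_range.2 hT)
    (fun t _ ht => aF_eq_zero lam (by simp only [Finset.mem_range, not_lt] at ht; omega))]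
  rw [show (∑ t ∈ Finset.range (sortedParts lam).length, aF lam t)
      = (sortedParts lam).sum from aux_sum_getD _]
  rw [show (sortedParts lam).sum = lam.parts.sum by
    rw [← Multiset.sum_coe, sortedParts, Multiset.sort_eq]]
  exact lam.parts_sum

lemma even_ext (lam : Nat.Partition n) {T : ℕ} (hT : (sortedParts lam).length ≤ T) :
    evenIndexSum lam = ∑ t ∈ Finset.range T, (if (t+1) % 2 = 0 then aF lam t else 0) := by
  rw [evenIndexSum]
  exact Finset.sum_subset (Finset.range_subset_range.2 hT)
    (fun t _ ht => by
      rw [show (sortedParts lam).getD t 0 = aF lam t from rfl,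
        aF_eq_zero lam (by simp only [Finset.mem_range, not_lt] at ht; omega)]
      simp)

def muP {n : ℕ} (lam : Nat.Partition n) (M : ℕ) : Multiset ℕ :=
  ∑ v ∈ Finset.Icc 1 M, Multiset.replicate (dF lam (2*v)) v

def nuP {n : ℕ} (lam : Nat.Partition n) (M : ℕ) : Multiset ℕ :=
  ∑ v ∈ Finset.Icc 1 M, Multiset.replicate (dF lam (2*v+1)) v

lemma muP_pos {lam : Nat.Partition n} {M x : ℕ} (hx : x ∈ muP lam M) : 0 < x := by
  rw [muP, Multiset.mem_sum] at hx
  obtain ⟨v, hv, hx⟩ := hx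
  rw [Multiset.eq_of_mem_replicate hx]
  exact (Finset.mem_Icc.mp hv).1

lemma nuP_pos {lam : Nat.Partition n} {M x : ℕ} (hx : x ∈ nuP lam M) : 0 < x := by
  rw [nuP, Multiset.mem_sum] at hx
  obtain ⟨v, hv, hx⟩ := hx
  rw [Multiset.eq_of_mem_replicate hx]
  exact (Finset.mem_Icc.mp hv).1

lemma muP_sum (lam : Nat.Partition n) (M : ℕ) :
    (muP lam M).sum = ∑ v ∈ Finset.Icc 1 M, dF lam (2*v) * v := by
  rw [muP, aux_msum]
  simp [Multiset.sum_replicate, smul_eq_mul]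

lemma nuP_sum (lam : Nat.Partition n) (M : ℕ) :
    (nuP lam M).sum = ∑ v ∈ Finset.Icc 1 M, dF lam (2*v+1) * v := by
  rw [nuP, aux_msum]
  simp [Multiset.sum_replicate, smul_eq_mul]

lemma nuP_card (lam : Nat.Partition n) (M : ℕ) :
    Multiset.card (nuP lam M) = ∑ v ∈ Finset.Icc 1 M, dF lam (2*v+1) := by
  rw [nuP, aux_mcard]
  simp

lemma muP_count (lam : Nat.Partition n) (M : ℕ) {v : ℕ} (hv : v ∈ Finset.Icc 1 M) :
    Multiset.count v (muP lam M) = dF lam (2*v) := by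
  rw [muP, Multiset.count_sum']
  rw [Finset.sum_eq_single_of_mem v hv
    (fun w _ hw => by rw [Multiset.count_replicate, if_neg hw])]
  rw [Multiset.count_replicate, if_pos rfl]

lemma nuP_count (lam : Nat.Partition n) (M : ℕ) {v : ℕ} (hv : v ∈ Finset.Icc 1 M) :
    Multiset.count v (nuP lam M) = dF lam (2*v+1) := by
  rw [nuP, Multiset.count_sum']
  rw [Finset.sum_eq_single_of_mem v hv
    (fun w _ hw => by rw [Multiset.count_replicate, if_neg hw])]
  rw [Multiset.count_replicate, if_pos rfl]

/-- Key identity: the two constructed multisets partition the even-index sum. -/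
lemma key_j' (lam : Nat.Partition n) :
    ∑ v ∈ Finset.Icc 1 (n+1), (dF lam (2*v) * v + dF lam (2*v+1) * v)
      = evenIndexSum lam := by
  have hodd := aux_oddsum (aF lam) (aF_anti lam) (n+1)
  rw [aF_eq_zero lam (by have := length_sortedParts_le lam; omega), Nat.mul_zero, add_zero] at hodd
  rw [← even_ext lam (by have := length_sortedParts_le lam; omega)] at hodd
  rw [← hodd]
  apply Finset.sum_congr rfl
  intro v hv
  simp only [Finset.mem_Icc] at hv
  have h1 : aF lam (2*v) ≤ aF lam (2*v-1) := aF_anti lam (by omega)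
  have h2 : aF lam (2*v+1) ≤ aF lam (2*v) := aF_anti lam (by omega)
  simp only [dF, Nat.add_sub_cancel]
  zify [h1, h2, le_trans h2 h1]
  ring

lemma key_j (lam : Nat.Partition n) :
    (muP lam (n+1)).sum + (nuP lam (n+1)).sum = evenIndexSum lam := by
  rw [muP_sum, nuP_sum, ← Finset.sum_add_distrib]
  exact key_j' lam

lemma key_n (lam : Nat.Partition n) :
    dF lam 1 + 2 * evenIndexSum lam + ∑ v ∈ Finset.Icc 1 (n+1), dF lam (2*v+1) = n := by
  have htot := aux_totsum (aF lam) (aF_anti lam) (n+1)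
  rw [aF_eq_zero lam (t := 2*(n+1)+1) (by have := length_sortedParts_le lam; omega), Nat.mul_zero, add_zero,
    sum_aF lam (by have := length_sortedParts_le lam; omega)] at htot
  have hsplit : ∑ v ∈ Finset.Icc 1 (n+1),
      (2*v * (aF lam (2*v-1) - aF lam (2*v)) + (2*v+1) * (aF lam (2*v) - aF lam (2*v+1)))
      = 2 * (∑ v ∈ Finset.Icc 1 (n+1), (dF lam (2*v) * v + dF lam (2*v+1) * v))
        + ∑ v ∈ Finset.Icc 1 (n+1), dF lam (2*v+1) := by
    rw [Finset.mul_sum, ← Finset.sum_add_distrib]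
    apply Finset.sum_congr rfl
    intro v hv
    simp only [dF, Nat.add_sub_cancel]
    set p := aF lam (2*v-1) - aF lam (2*v)
    set q := aF lam (2*v) - aF lam (2*v+1)
    ring
  rw [hsplit, key_j'] at htot
  have hd1 : dF lam 1 = aF lam 0 - aF lam 1 := rfl
  omega

end PartLayer

/- ====== reconstruction layer ====== -/

def saF (M : ℕ) (E : ℕ → ℕ) (t : ℕ) : ℕ := ∑ k ∈ Finset.Ico (t+1) (2*M+2), E k

lemma saF_anti (M : ℕ) (E : ℕ → ℕ) : Antitone (saF M E) :=
  antitone_nat_of_succ_le fun _ =>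
    Finset.sum_le_sum_of_subset (Finset.Ico_subset_Ico (by omega) le_rfl)

lemma saF_zero (M : ℕ) (E : ℕ → ℕ) {t : ℕ} (ht : 2*M+1 ≤ t) : saF M E t = 0 := by
  rw [saF, Finset.Ico_eq_empty (by omega), Finset.sum_empty]

lemma saF_step (M : ℕ) (E : ℕ → ℕ) {t : ℕ} (ht : t + 1 < 2*M+2) :
    saF M E t = E (t+1) + saF M E (t+1) := by
  rw [saF, Finset.sum_eq_sum_Ico_succ_bot (by omega)]
  rfl

lemma range_sum_eq (N : ℕ) (g : ℕ → ℕ) :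
    ((Multiset.range N).map g).sum = ∑ t ∈ Finset.range N, g t := by
  rw [← Finset.range_val]
  rfl

def mkPart (n M : ℕ) (E : ℕ → ℕ) (h : ∑ t ∈ Finset.range (2*M+2), saF M E t = n) :
    Nat.Partition n :=
  Nat.Partition.ofSums n ((Multiset.range (2*M+2)).map (saF M E))
    (by rw [range_sum_eq]; exact h)

lemma mkPart_parts (n M : ℕ) (E : ℕ → ℕ) (h : ∑ t ∈ Finset.range (2*M+2), saF M E t = n) :
    (mkPart n M E h).parts
      = ↑(((List.range (2*M+2)).map (saF M E)).filter (· ≠ 0)) := by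
  rw [mkPart, Nat.Partition.ofSums_parts]
  rw [show (Multiset.range (2*M+2)) = ↑(List.range (2*M+2)) from rfl, Multiset.map_coe,
    Multiset.filter_coe]

lemma mkPart_aF (n M : ℕ) (E : ℕ → ℕ) (h : ∑ t ∈ Finset.range (2*M+2), saF M E t = n)
    (t : ℕ) : aF (mkPart n M E h) t = saF M E t := by
  obtain ⟨m, hm, hpos, hzero⟩ :=
    aux_prefix _ (saF_anti M E) (2*M+1) (saF_zero M E le_rfl)
  have hsp : sortedParts (mkPart n M E h) = (List.range m).map (saF M E) := by
    rw [sortedParts, mkPart_parts, aux_filter_map_range _ _ m (by omega) hpos hzero]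
    exact aux_sort_coe _ (aux_sorted_map_range _ (saF_anti M E) m)
  rw [show aF (mkPart n M E h) t = (sortedParts (mkPart n M E h)).getD t 0 from rfl, hsp]
  by_cases htm : t < m
  · rw [List.getD_eq_getElem _ _ (by simpa using htm)]
    simp
  · rw [List.getD_eq_default _ _ (by simpa using not_lt.mp htm)]
    exact (hzero t (by omega)).symm

lemma mkPart_dF (n M : ℕ) (E : ℕ → ℕ) (h : ∑ t ∈ Finset.range (2*M+2), saF M E t = n)
    {k : ℕ} (hk : 1 ≤ k) (hk2 : k ≤ 2*M+1) : dF (mkPart n M E h) k = E k := by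
  rw [show dF (mkPart n M E h) k = aF (mkPart n M E h) (k-1) - aF (mkPart n M E h) k from rfl,
    mkPart_aF, mkPart_aF, saF_step M E (t := k-1) (by omega), show k-1+1 = k by omega]
  omega

/- ====== the two maps ====== -/

noncomputable def Phi {n : ℕ} (j : ℕ) (lam : Nat.Partition n) (h : evenIndexSum lam = j) :
    Σ i : ℕ, Nat.Partition i × Nat.Partition (j - i) :=
  ⟨(muP lam (n+1)).sum,
    (⟨muP lam (n+1), fun hx => muP_pos hx, rfl⟩,
     ⟨nuP lam (n+1), fun hx => nuP_pos hx, by have := key_j lam; omega⟩)⟩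

lemma Phi_fst_le {n : ℕ} (j : ℕ) (lam : Nat.Partition n) (h : evenIndexSum lam = j) :
    (Phi j lam h).1 ≤ j := by
  have := key_j lam
  simp only [Phi]
  omega

section Psi
variable {n j : ℕ} (x : Σ i : ℕ, Nat.Partition i × Nat.Partition (j - i))

def PsiE (n : ℕ) {j : ℕ} (x : Σ i : ℕ, Nat.Partition i × Nat.Partition (j - i)) : ℕ → ℕ :=
  fun k =>
    if k = 1 then n - 2*j - Multiset.card x.2.2.parts
    else if k % 2 = 0 then Multiset.count (k/2) x.2.1.parts
    else Multiset.count (k/2) x.2.2.parts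

lemma PsiE_one : PsiE n x 1 = n - 2*j - Multiset.card x.2.2.parts := by
  simp [PsiE]

lemma PsiE_two {v : ℕ} (hv : 1 ≤ v) :
    PsiE n x (2*v) = Multiset.count v x.2.1.parts := by
  simp only [PsiE, if_neg (show ¬ (2*v = 1) by omega), if_pos (show 2*v % 2 = 0 by omega)]
  congr 1
  omega

lemma PsiE_odd {v : ℕ} (hv : 1 ≤ v) :
    PsiE n x (2*v+1) = Multiset.count v x.2.2.parts := by
  simp only [PsiE, if_neg (show ¬ (2*v+1 = 1) by omega),
    if_neg (show ¬ ((2*v+1) % 2 = 0) by omega)]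
  congr 1
  omega

lemma mu_parts_Icc (hjn : j ≤ n) (hx : x.1 ≤ j) :
    ∀ y ∈ x.2.1.parts, y ∈ Finset.Icc 1 (n+1) := by
  intro y hy
  have h1 := x.2.1.parts_pos hy
  have h2 : y ≤ x.2.1.parts.sum := Multiset.le_sum_of_mem hy
  rw [x.2.1.parts_sum] at h2
  simp only [Finset.mem_Icc]
  omega

lemma nu_parts_Icc (hjn : j ≤ n) :
    ∀ y ∈ x.2.2.parts, y ∈ Finset.Icc 1 (n+1) := by
  intro y hy
  have h1 := x.2.2.parts_pos hy
  have h2 : y ≤ x.2.2.parts.sum := Multiset.le_sum_of_mem hy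
  rw [x.2.2.parts_sum] at h2
  simp only [Finset.mem_Icc]
  omega

lemma nu_card_le : Multiset.card x.2.2.parts ≤ j - x.1 := by
  have := Multiset.card_nsmul_le_sum (s := x.2.2.parts) (a := 1)
    (fun y hy => x.2.2.parts_pos hy)
  simpa [x.2.2.parts_sum] using this

lemma psi_sum (hj : 3*j ≤ n) (hx : x.1 ≤ j) :
    ∑ t ∈ Finset.range (2*(n+1)+2), saF (n+1) (PsiE n x) t = n := by
  have hswap : ∑ t ∈ Finset.range (2*(n+1)+2), saF (n+1) (PsiE n x) t
      = ∑ k ∈ Finset.range (2*(n+1)+2), k * PsiE n x k := by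
    simp only [saF]
    rw [Finset.sum_comm' (t' := Finset.range (2*(n+1)+2)) (s' := fun k => Finset.range k)
      (fun t k => by simp only [Finset.mem_range, Finset.mem_Ico]; omega)]
    exact Finset.sum_congr rfl fun k _ => by
      rw [Finset.sum_const, Finset.card_range, smul_eq_mul]
  rw [hswap, aux_split (fun k => k * PsiE n x k) (n+1)]
  have hmu : ∀ v ∈ Finset.Icc 1 (n+1), 2*v * PsiE n x (2*v) + (2*v+1) * PsiE n x (2*v+1)
      = 2*(Multiset.count v x.2.1.parts * v)
        + (2*(Multiset.count v x.2.2.parts * v) + Multiset.count v x.2.2.parts) := by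
    intro v hv
    simp only [Finset.mem_Icc] at hv
    rw [PsiE_two x hv.1, PsiE_odd x hv.1]
    ring
  rw [show (∑ v ∈ Finset.Icc 1 (n+1),
        ((fun k => k * PsiE n x k) (2*v) + (fun k => k * PsiE n x k) (2*v+1)))
      = ∑ v ∈ Finset.Icc 1 (n+1), (2*(Multiset.count v x.2.1.parts * v)
        + (2*(Multiset.count v x.2.2.parts * v) + Multiset.count v x.2.2.parts))
    from Finset.sum_congr rfl hmu]
  rw [Finset.sum_add_distrib, Finset.sum_add_distrib, ← Finset.mul_sum, ← Finset.mul_sum,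
    aux_cnt_sum _ _ (mu_parts_Icc x (by omega) hx), aux_cnt_sum _ _ (nu_parts_Icc x (by omega)),
    aux_cnt_card _ _ (nu_parts_Icc x (by omega)), x.2.1.parts_sum, x.2.2.parts_sum, PsiE_one]
  have hc := nu_card_le x
  simp only [Nat.zero_mul, Nat.one_mul]
  omega

noncomputable def Psi (n j : ℕ) (hj : 3*j ≤ n)
    (x : Σ i : ℕ, Nat.Partition i × Nat.Partition (j - i)) (hx : x.1 ≤ j) : Nat.Partition n :=
  mkPart n (n+1) (PsiE n x) (psi_sum x hj hx)

lemma psi_even (hj : 3*j ≤ n) (hx : x.1 ≤ j) :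
    evenIndexSum (Psi n j hj x hx) = j := by
  set lam := Psi n j hj x hx with hlam
  have haf : ∀ t, aF lam t = saF (n+1) (PsiE n x) t := mkPart_aF _ _ _ _
  have hE0 : PsiE n x (2*(n+1)+1) = 0 := by
    rw [PsiE_odd x (by omega)]
    refine Multiset.count_eq_zero_of_notMem fun hmem => ?_
    have h1 := Multiset.le_sum_of_mem hmem
    rw [x.2.2.parts_sum] at h1
    omega
  have hlen : (sortedParts lam).length ≤ 2*(n+1) :=
    length_le_of_aF_zero lam (by
      rw [haf, saF_step (n+1) (PsiE n x) (t := 2*(n+1)) (by omega), hE0,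
        saF_zero _ _ (by omega)])
  rw [even_ext lam hlen,
    Finset.sum_congr rfl (fun t _ => by rw [haf t]),
    ← aux_oddsum (saF (n+1) (PsiE n x)) (saF_anti (n+1) (PsiE n x)) (n+1),
    saF_zero (n+1) (PsiE n x) (by omega), Nat.mul_zero, add_zero]
  have hterm : ∀ v ∈ Finset.Icc 1 (n+1),
      v * (saF (n+1) (PsiE n x) (2*v-1) - saF (n+1) (PsiE n x) (2*v+1))
      = Multiset.count v x.2.1.parts * v + Multiset.count v x.2.2.parts * v := by
    intro v hv
    simp only [Finset.mem_Icc] at hv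
    have e1 : saF (n+1) (PsiE n x) (2*v-1) = PsiE n x (2*v) + saF (n+1) (PsiE n x) (2*v) := by
      have := saF_step (n+1) (PsiE n x) (t := 2*v-1) (by omega)
      rwa [show 2*v-1+1 = 2*v by omega] at this
    have e2 : saF (n+1) (PsiE n x) (2*v) = PsiE n x (2*v+1) + saF (n+1) (PsiE n x) (2*v+1) :=
      saF_step (n+1) (PsiE n x) (by omega)
    rw [e1, e2, PsiE_two x hv.1, PsiE_odd x hv.1, ← add_assoc, Nat.add_sub_cancel]
    ring
  rw [Finset.sum_congr rfl hterm, Finset.sum_add_distrib,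
    aux_cnt_sum _ _ (mu_parts_Icc x (by omega) hx), aux_cnt_sum _ _ (nu_parts_Icc x (by omega)),
    x.2.1.parts_sum, x.2.2.parts_sum]
  show x.1 + (j - x.1) = j
  omega

end Psi

/- ====== round trips ====== -/

lemma aux_sigma_ext {j : ℕ} (x y : Σ i : ℕ, Nat.Partition i × Nat.Partition (j - i))
    (h1 : x.2.1.parts = y.2.1.parts) (h2 : x.2.2.parts = y.2.2.parts) : x = y := by
  obtain ⟨i, μ, ν⟩ := x
  obtain ⟨i', μ', ν'⟩ := y
  simp only at h1 h2
  have hi : i = i' := by rw [← μ.parts_sum, ← μ'.parts_sum, h1]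
  subst hi
  have e1 : μ = μ' := Nat.Partition.ext h1
  have e2 : ν = ν' := Nat.Partition.ext h2
  rw [e1, e2]

lemma psi_phi {n j : ℕ} (hj : 3*j ≤ n) (lam : Nat.Partition n) (h : evenIndexSum lam = j)
    (hle : (Phi j lam h).1 ≤ j) :
    Psi n j hj (Phi j lam h) hle = lam := by
  apply Nat.Partition.ext
  have hE : ∀ k, 1 ≤ k → k ≤ 2*(n+1)+1 → PsiE n (Phi j lam h) k = dF lam k := by
    intro k hk1 hk2
    rcases Nat.lt_or_ge k 2 with hk | hk
    · have hk' : k = 1 := by omega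
      subst hk'
      have hkey := key_n lam
      rw [h] at hkey
      have hcard : Multiset.card (Phi j lam h).2.2.parts
          = ∑ v ∈ Finset.Icc 1 (n+1), dF lam (2*v+1) := by
        show Multiset.card (nuP lam (n+1)) = _
        exact nuP_card lam (n+1)
      rw [PsiE_one, hcard]
      omega
    · rcases Nat.even_or_odd k with ⟨v, hv⟩ | ⟨v, hv⟩
      · have hv' : k = 2*v := by omega
        subst hv'
        rw [PsiE_two _ (by omega)]
        show Multiset.count v (muP lam (n+1)) = dF lam (2*v)
        exact muP_count lam (n+1) (Finset.mem_Icc.mpr (by omega))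
      · have hv' : k = 2*v+1 := by omega
        subst hv'
        rw [PsiE_odd _ (by omega)]
        show Multiset.count v (nuP lam (n+1)) = dF lam (2*v+1)
        exact nuP_count lam (n+1) (Finset.mem_Icc.mpr (by omega))
  have hsa : ∀ t, t < 2*(n+1)+2 → saF (n+1) (PsiE n (Phi j lam h)) t = aF lam t := by
    intro t ht
    have hcongr : saF (n+1) (PsiE n (Phi j lam h)) t
        = ∑ k ∈ Finset.Ico (t+1) (2*(n+1)+1+1), (aF lam (k-1) - aF lam k) := by
      rw [saF, show 2*(n+1)+2 = 2*(n+1)+1+1 by omega]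
      refine Finset.sum_congr rfl fun k hk => ?_
      rw [Finset.mem_Ico] at hk
      exact hE k (by omega) (by omega)
    rw [hcongr, aux_tele (aF lam) (aF_anti lam) (2*(n+1)+1) t (by omega),
      aF_eq_zero lam (t := 2*(n+1)+1) (by have := length_sortedParts_le lam; omega),
      Nat.sub_zero]
  show (mkPart _ _ _ _).parts = lam.parts
  rw [mkPart_parts]
  have hmap : (List.range (2*(n+1)+2)).map (saF (n+1) (PsiE n (Phi j lam h)))
      = (List.range (2*(n+1)+2)).map (aF lam) :=
    List.map_congr_left (fun t ht => hsa t (by rw [List.mem_range] at ht; omega))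
  rw [hmap, aux_filter_map_range (aF lam) _ (sortedParts lam).length
    (by have := length_sortedParts_le lam; omega)
    (fun t ht => aF_ne_zero lam ht) (fun t ht => aF_eq_zero lam ht)]
  have hlist : (List.range (sortedParts lam).length).map (aF lam) = sortedParts lam := by
    apply List.ext_getElem (by simp)
    intro i h1 h2
    simp only [List.getElem_map, List.getElem_range, aF]
    rw [List.getD_eq_getElem _ _ h2]
  rw [hlist, sortedParts, Multiset.sort_eq]

lemma phi_psi {n j : ℕ} (hj : 3*j ≤ n) (x : Σ i : ℕ, Nat.Partition i × Nat.Partition (j - i))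
    (hx : x.1 ≤ j) (he : evenIndexSum (Psi n j hj x hx) = j) :
    Phi j (Psi n j hj x hx) he = x := by
  apply aux_sigma_ext
  · show muP (Psi n j hj x hx) (n+1) = x.2.1.parts
    rw [muP, Finset.sum_congr rfl (fun v hv => by
      rw [show dF (Psi n j hj x hx) (2*v) = PsiE n x (2*v) from
          mkPart_dF _ _ _ _ (by simp only [Finset.mem_Icc] at hv; omega)
            (by simp only [Finset.mem_Icc] at hv; omega),
        PsiE_two x (by simp only [Finset.mem_Icc] at hv; omega)])]
    exact aux_cnt3 _ _ (mu_parts_Icc x (by omega) hx)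
  · show nuP (Psi n j hj x hx) (n+1) = x.2.2.parts
    rw [nuP, Finset.sum_congr rfl (fun v hv => by
      rw [show dF (Psi n j hj x hx) (2*v+1) = PsiE n x (2*v+1) from
          mkPart_dF _ _ _ _ (by simp only [Finset.mem_Icc] at hv; omega)
            (by simp only [Finset.mem_Icc] at hv; omega),
        PsiE_odd x (by simp only [Finset.mem_Icc] at hv; omega)])]
    exact aux_cnt3 _ _ (nu_parts_Icc x (by omega))

/- ====== main theorem ====== -/

theorem stmt_0 (n j : ℕ) (hj : 3 * j ≤ n) :
    f n j = ∑ i ∈ Finset.range (j + 1), partitionCount i * partitionCount (j - i) := by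
  classical
  have hcard : ∑ i ∈ Finset.range (j + 1), partitionCount i * partitionCount (j-i)
      = ((Finset.range (j+1)).sigma
          (fun i => (Finset.univ : Finset (Nat.Partition i × Nat.Partition (j - i))))).card := by
    rw [Finset.card_sigma]
    exact Finset.sum_congr rfl fun i _ => by
      rw [Finset.card_univ, Fintype.card_prod, partitionCount, partitionCount]
  rw [f, hcard]
  refine Finset.card_bij'
    (fun lam hlam => Phi j lam ((Finset.mem_filter.mp hlam).2))
    (fun x hx => Psi n j (by omega) x (by
      have := (Finset.mem_sigma.mp hx).1
      rw [Finset.mem_range] at this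
      omega)) ?_ ?_ ?_ ?_
  · intro lam hlam
    rw [Finset.mem_sigma, Finset.mem_range]
    exact ⟨Nat.lt_succ_of_le (Phi_fst_le j lam _), Finset.mem_univ _⟩
  · intro x hx
    rw [Finset.mem_filter]
    exact ⟨Finset.mem_univ _, psi_even x hj _⟩
  · intro lam hlam
    exact psi_phi hj lam _ _
  · intro x hx
    exact phi_psi hj x _ _
end

section
/- For all integers n, j with 0 ≤ 2j ≤ n, the number of partitions of n whose parts of even index sum to j satisfies f(n,j) = Σ_{i=0}^{j} p(i)·p(j−i, n−2j), where p(a,b) denotes the number of partitions of a into at most b parts. -/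
/-- `p(a,b)`: the number of partitions of `a` with at most `b` parts. -/
noncomputable def partitionCountAtMostParts (a b : ℕ) : ℕ :=
  (Finset.univ.filter (fun lam : Nat.Partition a => lam.parts.card ≤ b)).card

section AuxStmt2
open Finset YoungDiagram

lemma cardOddRange (h : ℕ) : ((range h).filter (fun i => i % 2 = 1)).card = h / 2 := by
  induction h with
  | zero => simp
  | succ h ih =>
    rw [Finset.range_add_one, Finset.filter_insert]
    rcases Nat.eq_zero_or_pos (h % 2) with hp | hp
    · rw [if_neg (by omega), ih]; omega
    · rw [if_pos (by omega), Finset.card_insert_of_notMem (by simp), ih]; omega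

lemma countOdd (N h : ℕ) (hh : h ≤ N) :
    ∑ i ∈ range N, (if i % 2 = 1 ∧ i < h then (1:ℕ) else 0) = h / 2 := by
  classical
  rw [Finset.sum_ite, Finset.sum_const, Finset.sum_const]
  simp only [smul_eq_mul, mul_one, mul_zero, add_zero]
  have h1 : (range N).filter (fun i => i % 2 = 1 ∧ i < h)
      = (range h).filter (fun i => i % 2 = 1) := by
    ext c; simp; omega
  rw [h1, cardOddRange]

lemma sumIndLt (N r : ℕ) (hr : r ≤ N) :
    ∑ c ∈ range N, (if c < r then (1:ℕ) else 0) = r := by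
  classical
  rw [Finset.sum_ite, Finset.sum_const, Finset.sum_const]
  simp only [smul_eq_mul, mul_one, mul_zero, add_zero]
  have : (range N).filter (fun c => c < r) = range r := by
    ext c; simp; omega
  rw [this, Finset.card_range]

-- key double counting
lemma keyDC (Y : YoungDiagram) (N : ℕ) (h1 : Y.colLen 0 ≤ N) (h2 : Y.rowLen 0 ≤ N) :
    ∑ i ∈ range N, (if i % 2 = 1 then Y.rowLen i else 0)
      = ∑ c ∈ range N, Y.colLen c / 2 := by
  have step1 : ∀ i ∈ range N, (if i % 2 = 1 then Y.rowLen i else 0)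
      = ∑ c ∈ range N, (if i % 2 = 1 ∧ c < Y.rowLen i then (1:ℕ) else 0) := by
    intro i _
    rcases Nat.eq_zero_or_pos (i % 2) with hp | hp
    · rw [if_neg (by omega)]
      refine (Finset.sum_eq_zero ?_).symm
      intro c _; rw [if_neg (by omega)]
    · rw [if_pos (by omega)]
      have : ∀ c ∈ range N, (if i % 2 = 1 ∧ c < Y.rowLen i then (1:ℕ) else 0)
          = (if c < Y.rowLen i then (1:ℕ) else 0) := by
        intro c _; congr 1; simp only [eq_iff_iff]; constructor <;> intro h
        · exact h.2
        · exact ⟨by omega, h⟩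
      rw [Finset.sum_congr rfl this, sumIndLt _ _ ((Y.rowLen_anti 0 i (Nat.zero_le i)).trans h2)]
  rw [Finset.sum_congr rfl step1, Finset.sum_comm]
  refine Finset.sum_congr rfl fun c _ => ?_
  have hmem : ∀ i, (i % 2 = 1 ∧ c < Y.rowLen i) ↔ (i % 2 = 1 ∧ i < Y.colLen c) := by
    intro i
    rw [← YoungDiagram.mem_iff_lt_rowLen, ← YoungDiagram.mem_iff_lt_colLen]
  calc ∑ i ∈ range N, (if i % 2 = 1 ∧ c < Y.rowLen i then (1:ℕ) else 0)
      = ∑ i ∈ range N, (if i % 2 = 1 ∧ i < Y.colLen c then (1:ℕ) else 0) := by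
        refine Finset.sum_congr rfl fun i _ => ?_; rw [if_congr (hmem i) rfl rfl]
    _ = Y.colLen c / 2 := countOdd _ _ ((Y.colLen_anti 0 c (Nat.zero_le c)).trans h1)

lemma cardY (Y : YoungDiagram) (N : ℕ) (h1 : Y.colLen 0 ≤ N) :
    Y.cells.card = ∑ i ∈ range N, Y.rowLen i := by
  rw [Finset.card_eq_sum_card_fiberwise (f := Prod.fst) (t := range N)
    (fun c hc => by
      rw [Finset.mem_coe, Finset.mem_range]
      have : (c.1, 0) ∈ Y := Y.up_left_mem le_rfl (Nat.zero_le _) (by rwa [Finset.mem_coe, YoungDiagram.mem_cells] at hc)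
      calc c.1 < Y.colLen 0 := YoungDiagram.mem_iff_lt_colLen.mp this
        _ ≤ N := h1)]
  refine Finset.sum_congr rfl fun i _ => ?_
  rw [Y.rowLen_eq_card]
  rfl

lemma cardTranspose (Y : YoungDiagram) : Y.transpose.cells.card = Y.cells.card := by
  simp [YoungDiagram.transpose]

def toYD {n : ℕ} (lam : Nat.Partition n) : YoungDiagram :=
  YoungDiagram.ofRowLens (sortedParts lam) (List.sortedGE_iff_pairwise.mpr (lam.parts.pairwise_sort _))

lemma pos_sortedParts {n : ℕ} (lam : Nat.Partition n) : ∀ x ∈ sortedParts lam, 0 < x :=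
  fun x hx => lam.parts_pos ((Multiset.mem_sort _).mp hx)

lemma rowLens_toYD {n : ℕ} (lam : Nat.Partition n) : (toYD lam).rowLens = sortedParts lam :=
  YoungDiagram.rowLens_ofRowLens_eq_self (pos_sortedParts lam)

lemma card_toYD {n : ℕ} (lam : Nat.Partition n) : (toYD lam).cells.card = n := by
  rw [cardY (toYD lam) ((toYD lam).colLen 0) le_rfl]
  have : ∑ i ∈ range ((toYD lam).colLen 0), (toYD lam).rowLen i = (toYD lam).rowLens.sum := rfl
  rw [this, rowLens_toYD]
  rw [show (sortedParts lam).sum = (↑(sortedParts lam) : Multiset ℕ).sum from (Multiset.sum_coe _).symm]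
  rw [sortedParts, Multiset.sort_eq, lam.parts_sum]

/-- conjugate partition -/
def conjP {n : ℕ} (lam : Nat.Partition n) : Nat.Partition n where
  parts := ↑((toYD lam).transpose.rowLens)
  parts_pos := fun {x} hx => YoungDiagram.pos_of_mem_rowLens _ x (by exact_mod_cast hx)
  parts_sum := by
    rw [Multiset.sum_coe]
    have : (toYD lam).transpose.rowLens.sum
        = ∑ i ∈ range ((toYD lam).transpose.colLen 0), (toYD lam).transpose.rowLen i := rfl
    rw [this, ← cardY _ _ le_rfl, cardTranspose, card_toYD]

lemma sorted_eq_of_coe {l₁ l₂ : List ℕ} (h₁ : l₁.Pairwise (· ≥ ·)) (h₂ : l₂.Pairwise (· ≥ ·))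
    (h : (↑l₁ : Multiset ℕ) = ↑l₂) : l₁ = l₂ := by
  exact List.Perm.eq_of_pairwise' h₁ h₂ (Quotient.exact h)

lemma sortedParts_conjP {n : ℕ} (lam : Nat.Partition n) :
    sortedParts (conjP lam) = (toYD lam).transpose.rowLens := by
  apply sorted_eq_of_coe (Multiset.pairwise_sort _ _) (YoungDiagram.rowLens_sorted _).pairwise
  have h : (↑(sortedParts (conjP lam)) : Multiset ℕ) = (conjP lam).parts :=
    Multiset.sort_eq _ _
  exact h

lemma toYD_conjP {n : ℕ} (lam : Nat.Partition n) : toYD (conjP lam) = (toYD lam).transpose := by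
  have h := sortedParts_conjP lam
  rw [toYD]
  rw [← YoungDiagram.ofRowLens_to_rowLens_eq_self (μ := (toYD lam).transpose)]
  congr 1

lemma conjP_conjP {n : ℕ} (lam : Nat.Partition n) : conjP (conjP lam) = lam := by
  ext1
  show ↑((toYD (conjP lam)).transpose.rowLens) = lam.parts
  rw [toYD_conjP, YoungDiagram.transpose_transpose, rowLens_toYD, sortedParts, Multiset.sort_eq]

lemma rowLen_zero_of_ge {Y : YoungDiagram} {i : ℕ} (h : Y.colLen 0 ≤ i) : Y.rowLen i = 0 := by
  by_contra hne
  have : (i, 0) ∈ Y := YoungDiagram.mem_iff_lt_rowLen.mpr (Nat.pos_of_ne_zero hne)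
  exact absurd (YoungDiagram.mem_iff_lt_colLen.mp this) (by omega)

lemma identityB {n : ℕ} (lam : Nat.Partition n) :
    evenIndexSum lam = ((conjP lam).parts.map (fun p => p / 2)).sum := by
  set Y := toYD lam with hY
  set N := max (Y.colLen 0) (Y.rowLen 0) with hN
  have hsp : sortedParts lam = Y.rowLens := (rowLens_toYD lam).symm
  have hL : (sortedParts lam).length = Y.colLen 0 := by rw [hsp, YoungDiagram.length_rowLens]
  -- LHS
  have lhs1 : evenIndexSum lam = ∑ k ∈ range (Y.colLen 0),
      (if k % 2 = 1 then Y.rowLen k else 0) := by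
    rw [evenIndexSum, hL]
    refine Finset.sum_congr rfl fun k hk => ?_
    rw [Finset.mem_range] at hk
    have hget : (sortedParts lam).getD k 0 = Y.rowLen k := by
      rw [hsp, List.getD_eq_getElem _ _ (by rwa [YoungDiagram.length_rowLens])]
      exact YoungDiagram.get_rowLens
    rw [hget]
    congr 1
    simp only [eq_iff_iff]; omega
  have lhs2 : evenIndexSum lam = ∑ k ∈ range N,
      (if k % 2 = 1 then Y.rowLen k else 0) := by
    rw [lhs1]
    refine Finset.sum_subset (Finset.range_subset_range.mpr (le_max_left _ _)) ?_
    intro k _ hk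
    rw [Finset.mem_range, not_lt] at hk
    simp [rowLen_zero_of_ge hk]
  -- RHS
  have rhs1 : ((conjP lam).parts.map (fun p => p / 2)).sum
      = ∑ c ∈ range (Y.rowLen 0), Y.colLen c / 2 := by
    show ((↑(Y.transpose.rowLens) : Multiset ℕ).map (fun p => p / 2)).sum = _
    rw [Multiset.map_coe, Multiset.sum_coe]
    have : Y.transpose.rowLens.map (fun p => p / 2)
        = (List.range (Y.rowLen 0)).map (fun c => Y.colLen c / 2) := by
      rw [YoungDiagram.rowLens, List.map_map]
      rw [YoungDiagram.colLen_transpose]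
      refine List.map_congr_left fun c _ => ?_
      simp [YoungDiagram.rowLen_transpose]
    rw [this]
    rfl
  have rhs2 : ((conjP lam).parts.map (fun p => p / 2)).sum
      = ∑ c ∈ range N, Y.colLen c / 2 := by
    rw [rhs1]
    refine Finset.sum_subset (Finset.range_subset_range.mpr (le_max_right _ _)) ?_
    intro c _ hc
    rw [Finset.mem_range, not_lt] at hc
    have : Y.colLen c = 0 := by
      rw [← YoungDiagram.rowLen_transpose]
      exact rowLen_zero_of_ge (by rwa [YoungDiagram.colLen_transpose])
    simp [this]
  rw [lhs2, rhs2]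
  exact keyDC Y N (le_max_left _ _) (le_max_right _ _)

lemma sumDiv2 (s : Multiset ℕ) :
    s.sum = 2 * (s.map (fun p => p / 2)).sum + (s.filter (fun p => p % 2 = 1)).card := by
  induction s using Multiset.induction_on with
  | empty => simp
  | cons a s ih =>
    simp only [Multiset.sum_cons, Multiset.map_cons, Multiset.filter_cons]
    split_ifs with h <;> simp [Multiset.card_cons] <;> omega

lemma splitSum (s : Multiset ℕ) :
    (s.map (fun p => p / 2)).sum
      = ((s.filter (fun p => p % 2 = 0)).map (fun p => p / 2)).sum
        + ((s.filter (fun p => p % 2 = 1 ∧ p ≠ 1)).map (fun p => p / 2)).sum := by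
  induction s using Multiset.induction_on with
  | empty => simp
  | cons a s ih =>
    simp only [Multiset.map_cons, Multiset.sum_cons, Multiset.filter_cons]
    split_ifs with h1 h2 <;> simp [ih] <;> omega

lemma odCard (s : Multiset ℕ) :
    (s.filter (fun p => p % 2 = 1)).card
      = (s.filter (fun p => p % 2 = 1 ∧ p ≠ 1)).card + s.count 1 := by
  induction s using Multiset.induction_on with
  | empty => simp
  | cons a s ih =>
    simp only [Multiset.filter_cons, Multiset.count_cons]
    split_ifs with h1 h2 <;> simp [ih] <;> omega

lemma mapMulSum (s : Multiset ℕ) : (s.map (fun m => 2 * m)).sum = 2 * s.sum := by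
  induction s using Multiset.induction_on with
  | empty => simp
  | cons a s ih => simp [ih]; ring

lemma mapMulAddSum (s : Multiset ℕ) :
    (s.map (fun m => 2 * m + 1)).sum = 2 * s.sum + s.card := by
  induction s using Multiset.induction_on with
  | empty => simp
  | cons a s ih => simp [ih]; ring

/-- first partition of the split: even parts halved -/
def fwdAlpha {n : ℕ} (π : Nat.Partition n) :
    Nat.Partition (((π.parts.filter (fun p => p % 2 = 0)).map (fun p => p / 2)).sum) where
  parts := (π.parts.filter (fun p => p % 2 = 0)).map (fun p => p / 2)
  parts_pos := by
    intro i hi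
    obtain ⟨p, hp, rfl⟩ := Multiset.mem_map.mp hi
    have h1 := π.parts_pos (Multiset.mem_of_mem_filter hp)
    have h2 := Multiset.of_mem_filter hp
    omega
  parts_sum := rfl

/-- second partition of the split: odd parts (other than 1) halved -/
def fwdBeta {n : ℕ} (j : ℕ) (π : Nat.Partition n)
    (hsum : (π.parts.map (fun p => p / 2)).sum = j) :
    Nat.Partition (j - ((π.parts.filter (fun p => p % 2 = 0)).map (fun p => p / 2)).sum) where
  parts := (π.parts.filter (fun p => p % 2 = 1 ∧ p ≠ 1)).map (fun p => p / 2)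
  parts_pos := by
    intro i hi
    obtain ⟨p, hp, rfl⟩ := Multiset.mem_map.mp hi
    have h1 := π.parts_pos (Multiset.mem_of_mem_filter hp)
    have h2 := Multiset.of_mem_filter hp
    omega
  parts_sum := by
    have := splitSum π.parts
    omega

/-- inverse of the split -/
def bwd (n j : ℕ) (hj : 2 * j ≤ n) (x : Σ i : ℕ, Nat.Partition i × Nat.Partition (j - i))
    (hle : x.1 ≤ j) (hcard : x.2.2.parts.card ≤ n - 2 * j) : Nat.Partition n where
  parts := x.2.1.parts.map (fun m => 2 * m) + x.2.2.parts.map (fun m => 2 * m + 1)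
    + Multiset.replicate (n - 2 * j - x.2.2.parts.card) 1
  parts_pos := by
    intro i hi
    rw [Multiset.mem_add, Multiset.mem_add] at hi
    rcases hi with (hi | hi) | hi
    · obtain ⟨p, hp, rfl⟩ := Multiset.mem_map.mp hi
      have := x.2.1.parts_pos hp; omega
    · obtain ⟨p, hp, rfl⟩ := Multiset.mem_map.mp hi
      omega
    · rw [Multiset.eq_of_mem_replicate hi]; omega
  parts_sum := by
    rw [Multiset.sum_add, Multiset.sum_add, mapMulSum, mapMulAddSum,
      Multiset.sum_replicate, x.2.1.parts_sum, x.2.2.parts_sum, smul_eq_mul, mul_one]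
    have h2 := x.2.2.parts_sum
    omega

lemma bwd_parts (n j : ℕ) (hj : 2 * j ≤ n) (x : Σ i : ℕ, Nat.Partition i × Nat.Partition (j - i))
    (hle : x.1 ≤ j) (hcard : x.2.2.parts.card ≤ n - 2 * j) :
    (bwd n j hj x hle hcard).parts
      = x.2.1.parts.map (fun m => 2 * m) + x.2.2.parts.map (fun m => 2 * m + 1)
        + Multiset.replicate (n - 2 * j - x.2.2.parts.card) 1 := rfl

lemma sigma_ext {j : ℕ} {x y : Σ i : ℕ, Nat.Partition i × Nat.Partition (j - i)}
    (h1 : x.1 = y.1) (h2 : x.2.1.parts = y.2.1.parts) (h3 : x.2.2.parts = y.2.2.parts) :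
    x = y := by
  obtain ⟨i, α, β⟩ := x
  obtain ⟨i', α', β'⟩ := y
  simp only at h1
  subst h1
  simp only [Sigma.mk.inj_iff, heq_eq_eq, Prod.mk.injEq, true_and]
  exact ⟨Nat.Partition.ext h2, Nat.Partition.ext h3⟩

lemma evBack (s : Multiset ℕ) :
    ((s.filter (fun p => p % 2 = 0)).map (fun p => p / 2)).map (fun m => 2 * m)
      = s.filter (fun p => p % 2 = 0) := by
  rw [Multiset.map_map]
  refine Eq.trans (Multiset.map_congr rfl ?_) (Multiset.map_id _)
  intro p hp
  have := Multiset.of_mem_filter hp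
  simp only [Function.comp_apply, id_eq] at this ⊢
  omega

lemma boBack (s : Multiset ℕ) :
    ((s.filter (fun p => p % 2 = 1 ∧ p ≠ 1)).map (fun p => p / 2)).map (fun m => 2 * m + 1)
      = s.filter (fun p => p % 2 = 1 ∧ p ≠ 1) := by
  rw [Multiset.map_map]
  refine Eq.trans (Multiset.map_congr rfl ?_) (Multiset.map_id _)
  intro p hp
  have := Multiset.of_mem_filter hp
  simp only [Function.comp_apply, id_eq] at this ⊢
  omega

lemma partsDecomp (s : Multiset ℕ) :
    s = s.filter (fun p => p % 2 = 0) + s.filter (fun p => p % 2 = 1 ∧ p ≠ 1)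
        + Multiset.replicate (s.count 1) 1 := by
  induction s using Multiset.induction_on with
  | empty => simp
  | cons a s ih =>
    by_cases h1 : a % 2 = 0
    · rw [Multiset.count_cons_of_ne (by omega) s,
        Multiset.filter_cons_of_pos (p := fun p => p % 2 = 0) _ h1,
        Multiset.filter_cons_of_neg (p := fun p => p % 2 = 1 ∧ p ≠ 1) _ (by simp; omega),
        Multiset.cons_add, Multiset.cons_add, ← ih]
    · by_cases h2 : a = 1
      · subst h2
        rw [Multiset.count_cons_self,
          Multiset.filter_cons_of_neg (p := fun p => p % 2 = 0) _ (by omega),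
          Multiset.filter_cons_of_neg (p := fun p => p % 2 = 1 ∧ p ≠ 1) _ (by simp),
          Multiset.replicate_succ, Multiset.add_cons, ← ih]
      · rw [Multiset.count_cons_of_ne (by omega) s,
          Multiset.filter_cons_of_neg (p := fun p => p % 2 = 0) _ h1,
          Multiset.filter_cons_of_pos (p := fun p => p % 2 = 1 ∧ p ≠ 1) _ (by simp; omega),
          Multiset.add_cons, Multiset.cons_add, ← ih]

-- filters of a reconstructed multiset
lemma filterEvB (A B : Multiset ℕ) (k : ℕ) (hB : ∀ m ∈ B, 0 < m) :
    (A.map (fun m => 2 * m) + B.map (fun m => 2 * m + 1)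
        + Multiset.replicate k 1).filter (fun p => p % 2 = 0)
      = A.map (fun m => 2 * m) := by
  rw [Multiset.filter_add, Multiset.filter_add]
  rw [Multiset.filter_eq_self.mpr, Multiset.filter_eq_nil.mpr, Multiset.filter_eq_nil.mpr]
  · simp
  · intro a ha; rw [Multiset.eq_of_mem_replicate ha]; omega
  · intro a ha; obtain ⟨m, _, rfl⟩ := Multiset.mem_map.mp ha; omega
  · intro a ha; obtain ⟨m, _, rfl⟩ := Multiset.mem_map.mp ha; omega

lemma filterBoB (A B : Multiset ℕ) (k : ℕ) (hB : ∀ m ∈ B, 0 < m) :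
    (A.map (fun m => 2 * m) + B.map (fun m => 2 * m + 1)
        + Multiset.replicate k 1).filter (fun p => p % 2 = 1 ∧ p ≠ 1)
      = B.map (fun m => 2 * m + 1) := by
  have hA : (A.map (fun m => 2 * m)).filter (fun p => p % 2 = 1 ∧ p ≠ 1) = 0 := by
    rw [Multiset.filter_eq_nil]
    intro a ha; obtain ⟨m, _, rfl⟩ := Multiset.mem_map.mp ha
    simp only [ne_eq, not_and]; omega
  have hBB : (B.map (fun m => 2 * m + 1)).filter (fun p => p % 2 = 1 ∧ p ≠ 1)
      = B.map (fun m => 2 * m + 1) := by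
    rw [Multiset.filter_eq_self]
    intro a ha; obtain ⟨m, hm, rfl⟩ := Multiset.mem_map.mp ha
    have := hB m hm; constructor <;> omega
  have hR : (Multiset.replicate k 1).filter (fun p => p % 2 = 1 ∧ p ≠ 1) = 0 := by
    rw [Multiset.filter_eq_nil]
    intro a ha; rw [Multiset.eq_of_mem_replicate ha]; simp
  rw [Multiset.filter_add, Multiset.filter_add, hA, hBB, hR]
  simp

lemma mapHalfMul (A : Multiset ℕ) : (A.map (fun m => 2 * m)).map (fun p => p / 2) = A := by
  rw [Multiset.map_map]
  refine Eq.trans (Multiset.map_congr rfl ?_) (Multiset.map_id _)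
  intro m _; simp only [Function.comp_apply, id_eq]; omega

lemma mapHalfMulAdd (A : Multiset ℕ) :
    (A.map (fun m => 2 * m + 1)).map (fun p => p / 2) = A := by
  rw [Multiset.map_map]
  refine Eq.trans (Multiset.map_congr rfl ?_) (Multiset.map_id _)
  intro m _; simp only [Function.comp_apply, id_eq]; omega

theorem stepB (n j : ℕ) (hj : 2 * j ≤ n) :
    (Finset.univ.filter
        (fun π : Nat.Partition n => (π.parts.map (fun p => p / 2)).sum = j)).card
      = ((Finset.range (j + 1)).sigma (fun i =>
          (Finset.univ : Finset (Nat.Partition i)) ×ˢ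
            (Finset.univ.filter
              (fun β : Nat.Partition (j - i) => β.parts.card ≤ n - 2 * j)))).card := by
  refine Finset.card_bij'
    (fun π hπ => ⟨_, (fwdAlpha π, fwdBeta j π (Finset.mem_filter.mp hπ).2)⟩)
    (fun x hx => bwd n j hj x
      (by have := (Finset.mem_sigma.mp hx).1; rw [Finset.mem_range] at this; omega)
      (by have := (Finset.mem_product.mp (Finset.mem_sigma.mp hx).2).2
          exact (Finset.mem_filter.mp this).2))
    ?_ ?_ ?_ ?_
  · -- fwd lands in sigma
    intro π hπ
    have hsum := (Finset.mem_filter.mp hπ).2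
    rw [Finset.mem_sigma]
    constructor
    · rw [Finset.mem_range]
      show ((π.parts.filter (fun p => p % 2 = 0)).map (fun p => p / 2)).sum < j + 1
      have := splitSum π.parts
      omega
    · rw [Finset.mem_product]
      refine ⟨Finset.mem_univ _, Finset.mem_filter.mpr ⟨Finset.mem_univ _, ?_⟩⟩
      show ((π.parts.filter (fun p => p % 2 = 1 ∧ p ≠ 1)).map (fun p => p / 2)).card ≤ n - 2 * j
      rw [Multiset.card_map]
      have h1 := sumDiv2 π.parts
      have h2 := odCard π.parts
      have h3 := π.parts_sum
      omega
  · -- bwd lands in filter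
    intro x hx
    refine Finset.mem_filter.mpr ⟨Finset.mem_univ _, ?_⟩
    show (((x.2.1.parts.map (fun m => 2 * m) + x.2.2.parts.map (fun m => 2 * m + 1)
        + Multiset.replicate (n - 2 * j - x.2.2.parts.card) 1)).map (fun p => p / 2)).sum = j
    rw [Multiset.map_add, Multiset.map_add, Multiset.sum_add, Multiset.sum_add,
      mapHalfMul, mapHalfMulAdd, x.2.1.parts_sum, x.2.2.parts_sum]
    have h1 : ((Multiset.replicate (n - 2 * j - x.2.2.parts.card) 1).map
        (fun p => p / 2)).sum = 0 := by
      rw [Multiset.map_replicate]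
      simp
    rw [h1]
    have := (Finset.mem_sigma.mp hx).1
    rw [Finset.mem_range] at this
    omega
  · -- left inverse
    intro π hπ
    have hsum := (Finset.mem_filter.mp hπ).2
    apply Nat.Partition.ext
    show ((π.parts.filter (fun p => p % 2 = 0)).map (fun p => p / 2)).map (fun m => 2 * m)
        + ((π.parts.filter (fun p => p % 2 = 1 ∧ p ≠ 1)).map (fun p => p / 2)).map
            (fun m => 2 * m + 1)
        + Multiset.replicate (n - 2 * j
            - ((π.parts.filter (fun p => p % 2 = 1 ∧ p ≠ 1)).map (fun p => p / 2)).card) 1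
      = π.parts
    rw [evBack, boBack, Multiset.card_map]
    have h1 := sumDiv2 π.parts
    have h2 := odCard π.parts
    have h3 := π.parts_sum
    have hcnt : n - 2 * j - (π.parts.filter (fun p => p % 2 = 1 ∧ p ≠ 1)).card
        = π.parts.count 1 := by omega
    rw [hcnt]
    exact (partsDecomp π.parts).symm
  · -- right inverse
    intro x hx
    refine sigma_ext ?_ ?_ ?_
    · show ((((bwd n j hj x _ _).parts).filter (fun p => p % 2 = 0)).map (fun p => p / 2)).sum
        = x.1
      rw [bwd_parts, filterEvB _ _ _ (fun m hm => x.2.2.parts_pos hm), mapHalfMul,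
        x.2.1.parts_sum]
    · show (((bwd n j hj x _ _).parts).filter (fun p => p % 2 = 0)).map (fun p => p / 2)
        = x.2.1.parts
      rw [bwd_parts, filterEvB _ _ _ (fun m hm => x.2.2.parts_pos hm), mapHalfMul]
    · show (((bwd n j hj x _ _).parts).filter (fun p => p % 2 = 1 ∧ p ≠ 1)).map (fun p => p / 2)
        = x.2.2.parts
      rw [bwd_parts, filterBoB _ _ _ (fun m hm => x.2.2.parts_pos hm), mapHalfMulAdd]

end AuxStmt2

theorem stmt_2 (n j : ℕ) (hj : 2 * j ≤ n) :
    f n j = ∑ i ∈ Finset.range (j + 1),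
      partitionCount i * partitionCountAtMostParts (j - i) (n - 2 * j) := by
  have hA : f n j = (Finset.univ.filter
      (fun π : Nat.Partition n => (π.parts.map (fun p => p / 2)).sum = j)).card := by
    rw [f]
    refine Finset.card_bij' (fun lam _ => conjP lam) (fun π _ => conjP π) ?_ ?_ ?_ ?_
    · intro lam hlam
      refine Finset.mem_filter.mpr ⟨Finset.mem_univ _, ?_⟩
      rw [← identityB]
      exact (Finset.mem_filter.mp hlam).2
    · intro π hπ
      refine Finset.mem_filter.mpr ⟨Finset.mem_univ _, ?_⟩
      have h := identityB (conjP π)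
      rw [conjP_conjP] at h
      rw [h]
      exact (Finset.mem_filter.mp hπ).2
    · intro lam _; exact conjP_conjP lam
    · intro π _; exact conjP_conjP π
  rw [hA, stepB n j hj, Finset.card_sigma]
  refine Finset.sum_congr rfl fun i _ => ?_
  rw [Finset.card_product, Finset.card_univ]
  rfl
end

section
/- For all integers m ≥ 1, 1 ≤ i ≤ m, and n ≥ 1, the sum of X_{m,i}(λ) over all partitions λ of n equals Σ_{k=1}^{n} p(n−k) · Σ_{d | k} ⌊(d + m − i)/m⌋. -/
/-- `X_{m,i}(λ)`: the sum of the parts of `λ` whose (1-based) index is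
congruent to `i` modulo `m`. -/
def X (m i : ℕ) {n : ℕ} (lam : Nat.Partition n) : ℕ :=
  ∑ j ∈ Finset.range (sortedParts lam).length,
    if (j + 1) % m = i % m then (sortedParts lam).getD j 0 else 0

open Multiset Finset

namespace Stmt4Aux

variable {n : ℕ}

/-- number of elements of `P` that are `≥ t` -/
def colCount (P : Multiset ℕ) (t : ℕ) : ℕ := (P.filter (fun p => t ≤ p)).card

lemma colCount_cons (a : ℕ) (P : Multiset ℕ) (t : ℕ) :
    colCount (a ::ₘ P) t = colCount P t + (if t ≤ a then 1 else 0) := by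
  unfold colCount
  rw [Multiset.filter_cons]
  split <;> simp [*]

lemma colCount_anti (P : Multiset ℕ) {t t' : ℕ} (h : t ≤ t') :
    colCount P t' ≤ colCount P t :=
  Multiset.card_le_card (Multiset.monotone_filter_right P (fun a (ha : t' ≤ a) => h.trans ha))

lemma colCount_le_card (P : Multiset ℕ) (t : ℕ) : colCount P t ≤ Multiset.card P :=
  Multiset.card_le_card (Multiset.filter_le _ _)

lemma card_le_sum {P : Multiset ℕ} (h : ∀ p ∈ P, 1 ≤ p) : Multiset.card P ≤ P.sum := by
  induction P using Multiset.induction with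
  | empty => simp
  | cons a P ih =>
    simp only [Multiset.card_cons, Multiset.sum_cons]
    have := h a (mem_cons_self _ _)
    have := ih (fun p hp => h p (mem_cons_of_mem hp))
    omega

lemma indicator_sum {a n : ℕ} (h : a ≤ n) :
    (∑ t ∈ Finset.Icc 1 n, if t ≤ a then 1 else 0) = a := by
  rw [Finset.sum_ite, Finset.sum_const, Finset.sum_const, smul_eq_mul, mul_one, smul_eq_mul,
    mul_zero, add_zero]
  have : (Finset.Icc 1 n).filter (fun t => t ≤ a) = Finset.Icc 1 a := by
    ext t; simp only [Finset.mem_filter, Finset.mem_Icc]; omega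
  rw [this, Nat.card_Icc]; omega

lemma sum_colCount {n : ℕ} {P : Multiset ℕ} (h : ∀ p ∈ P, p ≤ n) :
    ∑ t ∈ Finset.Icc 1 n, colCount P t = P.sum := by
  induction P using Multiset.induction with
  | empty => simp [colCount]
  | cons a P ih =>
    have ha : a ≤ n := h a (mem_cons_self _ _)
    rw [Multiset.sum_cons, ← ih (fun p hp => h p (mem_cons_of_mem hp))]
    simp only [colCount_cons, Finset.sum_add_distrib]
    rw [indicator_sum ha]
    omega

lemma count_add_colCount (P : Multiset ℕ) (v : ℕ) :
    P.count v + colCount P (v + 1) = colCount P v := by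
  induction P using Multiset.induction with
  | empty => simp [colCount]
  | cons a P ih =>
    rw [Multiset.count_cons, colCount_cons, colCount_cons]
    have : (if v = a then 1 else 0) + (if v + 1 ≤ a then 1 else 0) = (if v ≤ a then 1 else 0) := by
      split_ifs <;> omega
    omega

lemma colCount_eq_zero {n : ℕ} {P : Multiset ℕ} (h : ∀ p ∈ P, p ≤ n) {t : ℕ} (ht : n < t) :
    colCount P t = 0 := by
  unfold colCount
  rw [Multiset.card_eq_zero, Multiset.filter_eq_nil]
  intro p hp hle
  exact absurd (h p hp) (by omega)

lemma colCount_def (P : Multiset ℕ) (t : ℕ) :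
    colCount P t = (P.filter (fun p => t ≤ p)).card := rfl

lemma parts_le (lam : n.Partition) {p : ℕ} (hp : p ∈ lam.parts) : p ≤ n :=
  (Multiset.le_sum_of_mem hp).trans_eq lam.parts_sum

/-- the conjugate partition -/
noncomputable def conj (lam : n.Partition) : n.Partition :=
  Nat.Partition.ofSums n ((Finset.Icc 1 n).val.map (colCount lam.parts))
    (by
      have : ((Finset.Icc 1 n).val.map (colCount lam.parts)).sum
          = ∑ t ∈ Finset.Icc 1 n, colCount lam.parts t := rfl
      rw [this, sum_colCount (fun p hp => parts_le lam hp), lam.parts_sum])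

lemma conj_parts (lam : n.Partition) :
    (conj lam).parts = ((Finset.Icc 1 n).val.map (colCount lam.parts)).filter (· ≠ 0) := rfl

lemma colCount_conj (lam : n.Partition) {s : ℕ} (hs : 1 ≤ s) :
    colCount (conj lam).parts s
      = ((Finset.Icc 1 n).filter (fun t => s ≤ colCount lam.parts t)).card := by
  rw [conj_parts, colCount_def, Multiset.filter_filter]
  have : (Multiset.filter (fun a => s ≤ a ∧ a ≠ 0) ((Finset.Icc 1 n).val.map (colCount lam.parts)))
      = (Multiset.filter (fun a => s ≤ a) ((Finset.Icc 1 n).val.map (colCount lam.parts))) := by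
    apply Multiset.filter_congr
    intro x _
    constructor
    · rintro ⟨h1, _⟩; exact h1
    · intro h1; exact ⟨h1, by omega⟩
  rw [this, ← Multiset.countP_eq_card_filter, Multiset.countP_map]
  rfl

lemma colCount_le_n (lam : n.Partition) (t : ℕ) : colCount lam.parts t ≤ n :=
  (colCount_le_card _ _).trans ((card_le_sum (fun p hp => lam.parts_pos hp)).trans_eq
    lam.parts_sum)

lemma galois (lam : n.Partition) {t s : ℕ} (ht1 : 1 ≤ t) (htn : t ≤ n) (hs : 1 ≤ s) :
    t ≤ colCount (conj lam).parts s ↔ s ≤ colCount lam.parts t := by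
  rw [colCount_conj lam hs]
  constructor
  · intro h
    by_contra hc
    push_neg at hc
    have hsub : (Finset.Icc 1 n).filter (fun r => s ≤ colCount lam.parts r)
        ⊆ Finset.Icc 1 (t - 1) := by
      intro r hr
      simp only [Finset.mem_filter, Finset.mem_Icc] at hr ⊢
      obtain ⟨⟨hr1, hrn⟩, hrs⟩ := hr
      refine ⟨hr1, ?_⟩
      by_contra hrt
      push_neg at hrt
      have : colCount lam.parts r ≤ colCount lam.parts t := colCount_anti _ (by omega)
      omega
    have := Finset.card_le_card hsub
    rw [Nat.card_Icc] at this
    omega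
  · intro h
    have hsub : Finset.Icc 1 t ⊆
        (Finset.Icc 1 n).filter (fun r => s ≤ colCount lam.parts r) := by
      intro r hr
      simp only [Finset.mem_Icc] at hr
      simp only [Finset.mem_filter, Finset.mem_Icc]
      exact ⟨⟨hr.1, hr.2.trans htn⟩, h.trans (colCount_anti _ hr.2)⟩
    have := Finset.card_le_card hsub
    rw [Nat.card_Icc] at this
    omega

lemma colCount_conj_conj (lam : n.Partition) {t : ℕ} (ht : 1 ≤ t) :
    colCount (conj (conj lam)).parts t = colCount lam.parts t := by
  rcases le_or_gt t n with htn | htn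
  · apply le_antisymm
    · set s := colCount (conj (conj lam)).parts t with hs
      rcases Nat.eq_zero_or_pos s with h0 | hpos
      · omega
      · have hsn : s ≤ n := hs ▸ colCount_le_n _ _
        have h1 : t ≤ colCount (conj lam).parts s :=
          (galois (conj lam) hpos hsn ht).mp le_rfl
        exact (galois lam ht htn hpos).mp h1
    · set s := colCount lam.parts t with hs
      rcases Nat.eq_zero_or_pos s with h0 | hpos
      · omega
      · have hsn : s ≤ n := hs ▸ colCount_le_n _ _
        have h1 : t ≤ colCount (conj lam).parts s := (galois lam ht htn hpos).mpr le_rfl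
        exact (galois (conj lam) hpos hsn ht).mpr h1
  · rw [colCount_eq_zero (fun p hp => parts_le _ hp) htn,
      colCount_eq_zero (fun p hp => parts_le _ hp) htn]

lemma conj_conj (lam : n.Partition) : conj (conj lam) = lam := by
  ext1
  ext v
  rcases Nat.eq_zero_or_pos v with rfl | hv
  · rw [Multiset.count_eq_zero_of_notMem, Multiset.count_eq_zero_of_notMem]
    · exact fun h => lt_irrefl 0 (lam.parts_pos h)
    · exact fun h => lt_irrefl 0 ((conj (conj lam)).parts_pos h)
  · have h1 := count_add_colCount (conj (conj lam)).parts v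
    have h2 := count_add_colCount lam.parts v
    have e1 := colCount_conj_conj lam hv
    have e2 := colCount_conj_conj lam (t := v + 1) (by omega)
    omega

lemma sorted_getD_iff : ∀ (l : List ℕ), l.Pairwise (· ≥ ·) →
    ∀ j, j < l.length → ∀ t, (t ≤ l.getD j 0 ↔ j < l.countP (fun p => decide (t ≤ p))) := by
  intro l
  induction l with
  | nil => intro _ j hj; simp at hj
  | cons a l ih =>
    intro hs j hj t
    rw [List.pairwise_cons] at hs
    have hzero : (¬ t ≤ a) → l.countP (fun p => decide (t ≤ p)) = 0 := by
      intro hta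
      rw [List.countP_eq_zero]
      intro b hb
      simp only [decide_eq_true_eq]
      have := hs.1 b hb
      omega
    match j with
    | 0 =>
      simp only [List.getD_cons_zero, List.countP_cons]
      by_cases hta : t ≤ a
      · simp [hta]
      · simp [hta, hzero hta]
    | (j+1) =>
      simp only [List.getD_cons_succ, List.countP_cons]
      simp only [List.length_cons] at hj
      have hj' : j < l.length := by omega
      by_cases hta : t ≤ a
      · rw [if_pos (by simpa using hta), ih hs.2 j hj' t]
        omega
      · have hfalse : ¬ t ≤ l.getD j 0 := by
          rw [List.getD_eq_getElem l 0 hj']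
          have := hs.1 _ (List.getElem_mem hj')
          omega
        rw [if_neg (by simpa using hta), hzero hta]
        exact iff_of_false hfalse (by omega)

/-- number of `j` with `1 ≤ j ≤ x` and `j ≡ i [MOD m]` -/
def idxCount (m i x : ℕ) : ℕ := ((Finset.range x).filter (fun j => (j + 1) % m = i % m)).card

lemma colCount_eq_countP (lam : n.Partition) (t : ℕ) :
    colCount lam.parts t = (sortedParts lam).countP (fun p => decide (t ≤ p)) := by
  rw [colCount, ← Multiset.countP_eq_card_filter, ← Multiset.sort_eq lam.parts (· ≥ ·),
    Multiset.coe_countP]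
  rfl

lemma X_eq_sum_idxCount (m i : ℕ) (lam : n.Partition) :
    X m i lam = ∑ t ∈ Finset.Icc 1 n, idxCount m i (colCount lam.parts t) := by
  set l := sortedParts lam with hl
  have hsort : l.Pairwise (· ≥ ·) := Multiset.pairwise_sort _ _
  have hmem : ∀ j, j < l.length → l.getD j 0 ∈ lam.parts := by
    intro j hj
    rw [List.getD_eq_getElem l 0 hj]
    have h1 : l[j] ∈ l := List.getElem_mem hj
    have h2 : (↑l : Multiset ℕ) = lam.parts := Multiset.sort_eq _ _
    rw [← h2]
    exact Multiset.mem_coe.mpr h1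
  have key : ∀ t, 1 ≤ t → ∀ j, j < l.length → (t ≤ l.getD j 0 ↔ j < colCount lam.parts t) := by
    intro t _ j hj
    rw [colCount_eq_countP lam t, ← hl]
    exact sorted_getD_iff l hsort j hj t
  have hcle : ∀ t, colCount lam.parts t ≤ l.length := by
    intro t
    rw [colCount_eq_countP lam t, ← hl]
    exact List.countP_le_length
  rw [X]
  have step1 : ∀ j ∈ Finset.range l.length,
      (if (j + 1) % m = i % m then l.getD j 0 else 0)
      = ∑ t ∈ Finset.Icc 1 n, (if ((j + 1) % m = i % m ∧ t ≤ l.getD j 0) then 1 else 0) := by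
    intro j hj
    rw [Finset.mem_range] at hj
    have han : l.getD j 0 ≤ n := parts_le lam (hmem j hj)
    by_cases hc : (j + 1) % m = i % m
    · simp only [hc, true_and, if_true]
      exact (indicator_sum han).symm
    · simp [hc]
  rw [Finset.sum_congr rfl step1, Finset.sum_comm]
  apply Finset.sum_congr rfl
  intro t ht
  rw [Finset.mem_Icc] at ht
  have step2 : ∀ j ∈ Finset.range l.length,
      (if ((j + 1) % m = i % m ∧ t ≤ l.getD j 0) then (1:ℕ) else 0)
      = (if ((j + 1) % m = i % m ∧ j < colCount lam.parts t) then (1:ℕ) else 0) := by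
    intro j hj
    rw [Finset.mem_range] at hj
    have hk := key t ht.1 j hj
    by_cases hc : (j + 1) % m = i % m <;> simp only [hc, true_and, false_and, if_true, if_false]
    rw [if_congr hk rfl rfl]
  rw [Finset.sum_congr rfl step2, ← Finset.card_filter, idxCount]
  congr 1
  ext j
  simp only [Finset.mem_filter, Finset.mem_range]
  have hct := hcle t
  constructor
  · rintro ⟨_, h1, h2⟩; exact ⟨h2, h1⟩
  · rintro ⟨h1, h2⟩; exact ⟨lt_of_lt_of_le h1 hct, h2, h1⟩

lemma dvd_iff_mod {m i : ℕ} (x : ℕ) (hm : 1 ≤ m) (hi1 : 1 ≤ i) (him : i ≤ m) :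
    m ∣ x + (m - i) + 1 ↔ (x + 1) % m = i % m := by
  have hqr : m * ((x + 1) / m) + (x + 1) % m = x + 1 := Nat.div_add_mod _ _
  set q := (x + 1) / m with hq
  set r := (x + 1) % m with hrdef
  have hrlt : r < m := Nat.mod_lt _ hm
  have hsplit : x + (m - i) + 1 = m * q + (r + (m - i)) := by omega
  rw [hsplit, Nat.dvd_add_right (Dvd.intro q rfl)]
  rcases eq_or_lt_of_le him with rfl | hlt
  · rw [Nat.mod_self]
    simp only [Nat.sub_self, Nat.add_zero]
    constructor
    · intro h; exact Nat.eq_zero_of_dvd_of_lt h hrlt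
    · intro h; simp [h]
  · rw [Nat.mod_eq_of_lt hlt]
    constructor
    · intro h
      obtain ⟨k, hk⟩ := h
      have hk2 : k < 2 := by
        by_contra hc
        push_neg at hc
        have : m * 2 ≤ m * k := Nat.mul_le_mul_left m hc
        omega
      interval_cases k <;> omega
    · intro h
      exact ⟨1, by omega⟩

lemma idxCount_eq {m i : ℕ} (hm : 1 ≤ m) (hi1 : 1 ≤ i) (him : i ≤ m) (x : ℕ) :
    idxCount m i x = (x + m - i) / m := by
  induction x with
  | zero =>
    simp only [idxCount, Finset.range_zero, Finset.filter_empty, Finset.card_empty]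
    rw [Nat.zero_add, Nat.div_eq_of_lt (by omega)]
  | succ x ih =>
    have h1 : idxCount m i (x + 1) = idxCount m i x + (if (x + 1) % m = i % m then 1 else 0) := by
      rw [idxCount, idxCount, Finset.range_add_one, Finset.filter_insert]
      split
      · rw [Finset.card_insert_of_notMem (by simp)]
      · simp
    have h2 : x + 1 + m - i = (x + (m - i)) + 1 := by omega
    have h3 : x + m - i = x + (m - i) := by omega
    rw [h1, ih, h3, h2, Nat.succ_div]
    congr 1
    exact if_congr (dvd_iff_mod x hm hi1 him).symm rfl rfl

lemma card_count_ge (r s : ℕ) (hr : 1 ≤ r) (hs : 1 ≤ s) :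
    (Finset.univ.filter (fun lam : n.Partition => s ≤ lam.parts.count r)).card
      = if r * s ≤ n then partitionCount (n - r * s) else 0 := by
  have hrep : ∀ lam : n.Partition, s ≤ lam.parts.count r → r * s ≤ n := by
    intro lam h
    have h2 : Multiset.replicate s r ≤ lam.parts := Multiset.le_count_iff_replicate_le.mp h
    have h3 : (Multiset.replicate s r).sum ≤ lam.parts.sum := by
      obtain ⟨u, hu⟩ := Multiset.le_iff_exists_add.mp h2
      rw [hu, Multiset.sum_add]; omega
    rw [Multiset.sum_replicate, smul_eq_mul, lam.parts_sum] at h3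
    have := mul_comm r s
    omega
  split
  case isFalse hle =>
    rw [Finset.card_eq_zero, Finset.filter_eq_empty_iff]
    intro lam _
    exact fun h => hle (hrep lam h)
  case isTrue hle =>
    rw [partitionCount, ← Finset.card_univ]
    refine Finset.card_bij' (fun lam hlam =>
        (⟨lam.parts - Multiset.replicate s r,
          fun hp => lam.parts_pos (Multiset.mem_of_le (tsub_le_self) hp),
          by
            have h2 : Multiset.replicate s r ≤ lam.parts := Multiset.le_count_iff_replicate_le.mp
              (by simpa using (Finset.mem_filter.mp hlam).2)
            have h4 := congrArg Multiset.sum (tsub_add_cancel_of_le h2)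
            rw [Multiset.sum_add, Multiset.sum_replicate, smul_eq_mul, lam.parts_sum] at h4
            have := mul_comm r s
            omega⟩ : (n - r * s).Partition))
      (fun mu _ =>
        (⟨mu.parts + Multiset.replicate s r,
          fun hp => by
            rcases Multiset.mem_add.mp hp with h | h
            · exact mu.parts_pos h
            · rw [Multiset.eq_of_mem_replicate h]; omega,
          by
            rw [Multiset.sum_add, Multiset.sum_replicate, smul_eq_mul, mu.parts_sum]
            have := mul_comm r s
            omega⟩ : n.Partition)) ?_ ?_ ?_ ?_
    · intro lam hlam
      exact Finset.mem_univ _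
    · intro mu _
      simp only [Finset.mem_filter, Finset.mem_univ, true_and]
      rw [Multiset.count_add, Multiset.count_replicate_self]
      omega
    · intro lam hlam
      ext1
      simp only
      exact tsub_add_cancel_of_le (Multiset.le_count_iff_replicate_le.mp
        (by simpa using (Finset.mem_filter.mp hlam).2))
    · intro mu _
      ext1
      simp only
      exact add_tsub_cancel_right _ _

lemma count_r_le (lam : n.Partition) (r : ℕ) : lam.parts.count r ≤ n :=
  (Multiset.count_le_card _ _).trans ((card_le_sum (fun p hp => lam.parts_pos hp)).trans_eq
    lam.parts_sum)

lemma sum_count (r : ℕ) (hr : 1 ≤ r) :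
    ∑ lam : n.Partition, lam.parts.count r
      = ∑ s ∈ Finset.Icc 1 n, (if r * s ≤ n then partitionCount (n - r * s) else 0) := by
  have step1 : ∀ lam : n.Partition,
      lam.parts.count r = ∑ s ∈ Finset.Icc 1 n, (if s ≤ lam.parts.count r then 1 else 0) :=
    fun lam => (indicator_sum (count_r_le lam r)).symm
  rw [Finset.sum_congr rfl (fun lam _ => step1 lam), Finset.sum_comm]
  apply Finset.sum_congr rfl
  intro s hs
  rw [Finset.mem_Icc] at hs
  rw [← card_count_ge r s hr hs.1, Finset.card_filter]

lemma idxCount_zero (m i : ℕ) : idxCount m i 0 = 0 := by simp [idxCount]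

lemma sum_colCount_eq_map_sum (h : ℕ → ℕ) (h0 : h 0 = 0) (lam : n.Partition) :
    ∑ t ∈ Finset.Icc 1 n, h (colCount lam.parts t) = ((conj lam).parts.map h).sum := by
  have e1 : ∑ t ∈ Finset.Icc 1 n, h (colCount lam.parts t)
      = (((Finset.Icc 1 n).val.map (colCount lam.parts)).map h).sum := by
    rw [Multiset.map_map]; rfl
  rw [e1, conj_parts]
  set M := (Finset.Icc 1 n).val.map (colCount lam.parts) with hM
  conv_lhs => rw [← Multiset.filter_add_not (· ≠ 0) M]
  rw [Multiset.map_add, Multiset.sum_add]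
  have : ((M.filter (fun a => ¬ a ≠ 0)).map h).sum = 0 := by
    apply Multiset.sum_eq_zero
    intro x hx
    obtain ⟨a, ha, rfl⟩ := Multiset.mem_map.mp hx
    have := (Multiset.mem_filter.mp ha).2
    simp only [ne_eq, not_not] at this
    rw [this, h0]
  omega

lemma conj_bijective : Function.Bijective (conj : n.Partition → n.Partition) :=
  Function.Involutive.bijective conj_conj

lemma sum_conj_eq (f : n.Partition → ℕ) :
    ∑ lam : n.Partition, f (conj lam) = ∑ lam : n.Partition, f lam :=
  Fintype.sum_bijective conj conj_bijective _ _ (fun _ => rfl)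

lemma map_sum_eq_Icc (h : ℕ → ℕ) (lam : n.Partition) :
    (lam.parts.map h).sum = ∑ r ∈ Finset.Icc 1 n, lam.parts.count r * h r := by
  rw [Finset.sum_multiset_map_count]
  apply Finset.sum_subset
  · intro r hr
    rw [Multiset.mem_toFinset] at hr
    rw [Finset.mem_Icc]
    exact ⟨lam.parts_pos hr, parts_le lam hr⟩
  · intro r _ hr
    rw [Multiset.mem_toFinset] at hr
    rw [Multiset.count_eq_zero_of_notMem hr, zero_smul]

-- divisor reindexing
lemma divisor_reindex (F : ℕ × ℕ → ℕ) :
    ∑ k ∈ Finset.Icc 1 n, ∑ x ∈ k.divisorsAntidiagonal, F x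
      = ∑ r ∈ Finset.Icc 1 n, ∑ s ∈ Finset.Icc 1 n, (if r * s ≤ n then F (r, s) else 0) := by
  have e2 : ∀ r : ℕ, ∑ s ∈ Finset.Icc 1 n, (if r * s ≤ n then F (r, s) else 0)
      = ∑ s ∈ (Finset.Icc 1 n).filter (fun s => r * s ≤ n), F (r, s) := by
    intro r
    rw [Finset.sum_filter]
  rw [Finset.sum_congr rfl (fun r _ => e2 r)]
  rw [Finset.sum_sigma', Finset.sum_sigma']
  refine Finset.sum_nbij' (i := fun x => (⟨x.snd.1, x.snd.2⟩ : Σ _ : ℕ, ℕ))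
    (j := fun y => (⟨y.fst * y.snd, (y.fst, y.snd)⟩ : Σ _ : ℕ, ℕ × ℕ)) ?_ ?_ ?_ ?_ ?_
  · intro x hx
    rw [Finset.mem_sigma] at hx
    obtain ⟨hk, hd⟩ := hx
    rw [Finset.mem_Icc] at hk
    rw [Nat.mem_divisorsAntidiagonal] at hd
    rw [Finset.mem_sigma, Finset.mem_Icc, Finset.mem_filter, Finset.mem_Icc]
    have h1 : x.2.1 ≥ 1 := by
      rcases Nat.eq_zero_or_pos x.2.1 with h | h
      · rw [h] at hd; simp at hd; omega
      · exact h
    have h2 : x.2.2 ≥ 1 := by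
      rcases Nat.eq_zero_or_pos x.2.2 with h | h
      · rw [h] at hd; simp at hd; omega
      · exact h
    have h3 : x.2.1 * x.2.2 = x.1 := hd.1
    refine ⟨⟨h1, ?_⟩, ⟨h2, ?_⟩, by show x.2.1 * x.2.2 ≤ n; omega⟩
    · calc x.2.1 ≤ x.2.1 * x.2.2 := Nat.le_mul_of_pos_right _ h2
        _ ≤ n := by omega
    · calc x.2.2 ≤ x.2.1 * x.2.2 := Nat.le_mul_of_pos_left _ h1
        _ ≤ n := by omega
  · intro y hy
    rw [Finset.mem_sigma, Finset.mem_Icc, Finset.mem_filter, Finset.mem_Icc] at hy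
    obtain ⟨⟨h1, _⟩, ⟨h2, _⟩, h3⟩ := hy
    rw [Finset.mem_sigma, Finset.mem_Icc, Nat.mem_divisorsAntidiagonal]
    exact ⟨⟨Nat.one_le_iff_ne_zero.mpr (by positivity), h3⟩, rfl, by positivity⟩
  · intro x hx
    rw [Finset.mem_sigma] at hx
    obtain ⟨_, hd⟩ := hx
    rw [Nat.mem_divisorsAntidiagonal] at hd
    exact Sigma.ext hd.1 (by simp)
  · intro y _
    rfl
  · intro x _
    rfl

end Stmt4Aux

open Stmt4Aux in
theorem stmt_4 (m i n : ℕ) (hm : 1 ≤ m) (hi1 : 1 ≤ i) (him : i ≤ m) (hn : 1 ≤ n) :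
    ∑ lam : Nat.Partition n, X m i lam =
      ∑ k ∈ Finset.Icc 1 n, partitionCount (n - k) *
        ∑ d ∈ k.divisors, (d + m - i) / m := by
  have hLHS : ∑ lam : Nat.Partition n, X m i lam
      = ∑ r ∈ Finset.Icc 1 n, ∑ s ∈ Finset.Icc 1 n,
          (if r * s ≤ n then partitionCount (n - r * s) * idxCount m i r else 0) := by
    calc ∑ lam : Nat.Partition n, X m i lam
        = ∑ lam : Nat.Partition n, ∑ t ∈ Finset.Icc 1 n,
            idxCount m i (colCount lam.parts t) :=
          Finset.sum_congr rfl (fun lam _ => X_eq_sum_idxCount m i lam)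
      _ = ∑ lam : Nat.Partition n, ((conj lam).parts.map (idxCount m i)).sum :=
          Finset.sum_congr rfl
            (fun lam _ => sum_colCount_eq_map_sum (idxCount m i) (idxCount_zero m i) lam)
      _ = ∑ lam : Nat.Partition n, (lam.parts.map (idxCount m i)).sum :=
          sum_conj_eq (fun mu => (mu.parts.map (idxCount m i)).sum)
      _ = ∑ lam : Nat.Partition n, ∑ r ∈ Finset.Icc 1 n,
            lam.parts.count r * idxCount m i r :=
          Finset.sum_congr rfl (fun lam _ => map_sum_eq_Icc (idxCount m i) lam)
      _ = ∑ r ∈ Finset.Icc 1 n, (∑ lam : Nat.Partition n, lam.parts.count r)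
            * idxCount m i r := by
          rw [Finset.sum_comm]
          exact Finset.sum_congr rfl (fun r _ => (Finset.sum_mul _ _ _).symm)
      _ = ∑ r ∈ Finset.Icc 1 n, (∑ s ∈ Finset.Icc 1 n,
            (if r * s ≤ n then partitionCount (n - r * s) else 0)) * idxCount m i r := by
          apply Finset.sum_congr rfl
          intro r hr
          rw [Finset.mem_Icc] at hr
          rw [sum_count r hr.1]
      _ = ∑ r ∈ Finset.Icc 1 n, ∑ s ∈ Finset.Icc 1 n,
            (if r * s ≤ n then partitionCount (n - r * s) * idxCount m i r else 0) := by
          apply Finset.sum_congr rfl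
          intro r _
          rw [Finset.sum_mul]
          apply Finset.sum_congr rfl
          intro s _
          rw [ite_mul, zero_mul]
  rw [hLHS, ← divisor_reindex (fun x => partitionCount (n - x.1 * x.2) * idxCount m i x.1)]
  apply Finset.sum_congr rfl
  intro k hk
  rw [Finset.mul_sum]
  have hstep : ∀ d ∈ k.divisors, partitionCount (n - k) * ((d + m - i) / m)
      = partitionCount (n - k) * idxCount m i d :=
    fun d _ => by rw [idxCount_eq hm hi1 him]
  rw [Finset.sum_congr rfl hstep,
    ← Nat.sum_divisorsAntidiagonal (fun d e => partitionCount (n - k) * idxCount m i d)]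
  apply Finset.sum_congr rfl
  intro x hx
  rw [Nat.mem_divisorsAntidiagonal] at hx
  rw [hx.1]
end

section
/- For integers m ≥ 2 and 1 ≤ ℓ ≤ m − 1, with ω = e^{2πi/m}, the Dirichlet series Σ_{j=1}^{∞} ω^{ℓj} j^{−s}, initially defined for Re(s) > 1, extends to an analytic function on the half-plane Re(s) > 0 whose value at s = 1 is log(1/(1 − ω^ℓ)) (principal branch). -/
open Complex Finset Filter Topology

lemma aux_cpow_diff (s : ℂ) (hs : 0 < s.re) (n : ℕ) :
    ‖((n+1:ℕ):ℂ)^(-s) - ((n+2:ℕ):ℂ)^(-s)‖ ≤ ‖s‖ * ((n+1:ℝ))^(-(s.re+1)) := by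
  have hs0 : s ≠ 0 := fun h => by simp [h] at hs
  set a : ℝ := n+1 with ha
  set b : ℝ := n+2 with hb
  have hapos : 0 < a := by positivity
  have F := fun t : ℝ => (t:ℂ)^(-s) / (-s)
  have hderiv : ∀ t ∈ Set.Icc a b,
      HasDerivWithinAt (fun t : ℝ => (t:ℂ)^(-s) / (-s)) ((t:ℂ)^(-s-1)) (Set.Icc a b) t := by
    intro t ht
    have htpos : 0 < t := lt_of_lt_of_le hapos ht.1
    have hr : (-s-1 : ℂ) ≠ -1 := by
      intro h
      apply hs0
      have : -s = 0 := by linear_combination h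
      simpa [neg_eq_zero] using this
    have := hasDerivAt_ofReal_cpow_const' htpos.ne' hr
    have h2 : (-s-1+1 : ℂ) = -s := by ring
    rw [h2] at this
    exact this.hasDerivWithinAt
  have hboundd : ∀ t ∈ Set.Icc a b, ‖(t:ℂ)^(-s-1)‖ ≤ a ^ (-(s.re+1)) := by
    intro t ht
    have htpos : 0 < t := lt_of_lt_of_le hapos ht.1
    have : ‖(t:ℂ)^(-s-1)‖ = t ^ ((-s-1).re) := by
      rw [norm_cpow_eq_rpow_re_of_pos htpos]
    rw [this]
    have hre : (-s-1).re = -(s.re+1) := by simp; ring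
    rw [hre]
    exact Real.rpow_le_rpow_of_nonpos hapos ht.1 (by linarith)
  have hmv := Convex.norm_image_sub_le_of_norm_hasDerivWithin_le hderiv hboundd
    (convex_Icc a b) (Set.left_mem_Icc.mpr (by simp [ha, hb])) (Set.right_mem_Icc.mpr (by simp [ha, hb]))
  have hba : ‖b - a‖ = 1 := by simp [ha, hb]; norm_num
  rw [hba, mul_one] at hmv
  have hcast_a : ((n+1:ℕ):ℂ) = (a:ℂ) := by push_cast [ha]; ring
  have hcast_b : ((n+2:ℕ):ℂ) = (b:ℂ) := by push_cast [hb]; ring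
  have hns : ‖s‖ ≠ 0 := norm_ne_zero_iff.mpr hs0
  have key : ‖((n+1:ℕ):ℂ)^(-s) - ((n+2:ℕ):ℂ)^(-s)‖
      = ‖s‖ * ‖(b:ℂ)^(-s) / (-s) - (a:ℂ)^(-s) / (-s)‖ := by
    have h1 : (b:ℂ)^(-s)/(-s) - (a:ℂ)^(-s)/(-s) = ((b:ℂ)^(-s) - (a:ℂ)^(-s))/(-s) := by ring
    rw [hcast_a, hcast_b, h1, norm_div, norm_neg, norm_sub_rev, eq_comm, mul_comm,
      div_mul_cancel₀ _ hns]
  rw [key]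
  exact mul_le_mul_of_nonneg_left hmv (norm_nonneg s)

lemma aux_abel (z : ℂ) (c : ℕ → ℂ) (N : ℕ) :
    ∑ n ∈ Finset.range (N+1), z^(n+1) * c (n+1)
      = (∑ n ∈ Finset.range N, (∑ k ∈ Finset.range (n+1), z^(k+1)) * (c (n+1) - c (n+2)))
        + (∑ k ∈ Finset.range (N+1), z^(k+1)) * c (N+1) := by
  induction N with
  | zero => simp
  | succ N ih =>
    rw [Finset.sum_range_succ (fun n => z^(n+1) * c (n+1)), ih,
      Finset.sum_range_succ (fun n => (∑ k ∈ Finset.range (n+1), z^(k+1)) * (c (n+1) - c (n+2))),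
      Finset.sum_range_succ (fun k => z^(k+1)) (N+1)]
    ring

lemma aux_core (z : ℂ) (hz1 : ‖z‖ = 1) (hzne : z ≠ 1) :
    ∃ A : ℂ → ℂ,
      AnalyticOnNhd ℂ A {s : ℂ | 0 < s.re} ∧
      (∀ s : ℂ, 1 < s.re → A s = ∑' j : ℕ, z ^ (j + 1) * ((j + 1 : ℕ) : ℂ) ^ (-s)) ∧
      A 1 = Complex.log (1 / (1 - z)) := by
  have hz0 : (1:ℂ) - z ≠ 0 := sub_ne_zero.mpr (Ne.symm hzne)
  set S : ℕ → ℂ := fun n => ∑ k ∈ Finset.range n, z^(k+1) with hSdef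
  set g : ℂ → ℕ → ℂ := fun s n => ((n+1:ℕ):ℂ)^(-s) - ((n+2:ℕ):ℂ)^(-s) with hgdef
  set C : ℝ := 2 / ‖1 - z‖ with hCdef
  have hC0 : 0 ≤ C := by positivity
  have hS : ∀ n, ‖S n‖ ≤ C := by
    intro n
    have h1 : S n = z * ((z^n - 1)/(z - 1)) := by
      rw [hSdef]
      simp only [pow_succ']
      rw [← Finset.mul_sum, geom_sum_eq hzne]
    have hpos : (0:ℝ) < ‖1 - z‖ := norm_pos_iff.mpr hz0
    rw [h1, norm_mul, hz1, one_mul, norm_div, norm_sub_rev z 1, hCdef]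
    refine div_le_div₀ (by norm_num) ?_ hpos le_rfl
    calc ‖z^n - 1‖ ≤ ‖z^n‖ + ‖(1:ℂ)‖ := norm_sub_le _ _
      _ = 2 := by rw [norm_pow, hz1]; norm_num
  -- summability of rpow
  have hsum_rpow : ∀ p : ℝ, 1 < p → Summable (fun n : ℕ => ((n:ℝ)+1)^(-p)) := by
    intro p hp
    have h1 : Summable (fun n : ℕ => (n:ℝ)^(-p)) :=
      Real.summable_nat_rpow.mpr (by linarith)
    have h2 := (summable_nat_add_iff 1).mpr h1
    exact h2.congr fun n => by push_cast; ring_nf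
  have hterm : ∀ s : ℂ, 0 < s.re → ∀ n, ‖S (n+1) * g s n‖ ≤ C * ‖s‖ * ((n:ℝ)+1)^(-(s.re+1)) := by
    intro s hs n
    rw [norm_mul, mul_assoc]
    have := aux_cpow_diff s hs n
    calc ‖S (n+1)‖ * ‖g s n‖ ≤ C * (‖s‖ * ((n+1:ℝ))^(-(s.re+1))) := by
          apply mul_le_mul (hS _) this (norm_nonneg _) hC0
      _ = C * (‖s‖ * ((n:ℝ)+1)^(-(s.re+1))) := by norm_num
  have hAs : ∀ s : ℂ, 0 < s.re → Summable (fun n => S (n+1) * g s n) := by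
    intro s hs
    apply Summable.of_norm_bounded (((hsum_rpow (s.re+1) (by linarith)).mul_left (C * ‖s‖)))
    exact hterm s hs
  set A : ℂ → ℂ := fun s => ∑' n, S (n+1) * g s n with hAdef
  -- partial sums of the Dirichlet series converge to A s
  have hT : ∀ s : ℂ, 0 < s.re →
      Tendsto (fun N => ∑ n ∈ Finset.range N, z^(n+1) * ((n+1:ℕ):ℂ)^(-s)) atTop (𝓝 (A s)) := by
    intro s hs
    have h1 : Tendsto (fun N => ∑ n ∈ Finset.range N, S (n+1) * g s n) atTop (𝓝 (A s)) :=
      (hAs s hs).hasSum.tendsto_sum_nat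
    have h2 : Tendsto (fun N : ℕ => S (N+1) * ((N+1:ℕ):ℂ)^(-s)) atTop (𝓝 0) := by
      apply squeeze_zero_norm (a := fun N : ℕ => C * ((N:ℝ)+1)^(-s.re))
      · intro N
        rw [norm_mul]
        have hnorm : ‖((N+1:ℕ):ℂ)^(-s)‖ = ((N+1:ℕ):ℝ)^((-s).re) :=
          norm_natCast_cpow_of_pos (Nat.succ_pos N) _
        rw [hnorm, neg_re]
        have : ((N+1:ℕ):ℝ) = (N:ℝ)+1 := by push_cast; ring
        rw [this]
        exact mul_le_mul_of_nonneg_right (hS _) (Real.rpow_nonneg (by positivity) _)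
      · have hb : Tendsto (fun N : ℕ => ((N:ℝ)+1)) atTop atTop :=
          tendsto_atTop_add_const_right atTop 1 tendsto_natCast_atTop_atTop
        have := (tendsto_rpow_neg_atTop hs).comp hb
        have h3 := this.const_mul C
        simpa using h3
    have h4 : Tendsto (fun N => ∑ n ∈ Finset.range (N+1), z^(n+1) * ((n+1:ℕ):ℂ)^(-s))
        atTop (𝓝 (A s + 0)) := by
      have := h1.add h2
      apply this.congr
      intro N
      exact (aux_abel z (fun k => ((k:ℕ):ℂ)^(-s)) N).symm
    rw [add_zero] at h4
    exact (tendsto_add_atTop_iff_nat 1).mp h4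
  -- analyticity
  have hopen : IsOpen {s : ℂ | 0 < s.re} := isOpen_lt continuous_const Complex.continuous_re
  have hcpowdiff : ∀ k : ℕ, Differentiable ℂ (fun s : ℂ => ((k+1:ℕ):ℂ)^(-s)) := by
    intro k
    apply Differentiable.const_cpow
    · exact differentiable_id.neg
    · exact Or.inl (Nat.cast_ne_zero.mpr (Nat.succ_ne_zero k))
  have hdiffF : ∀ N : ℕ, DifferentiableOn ℂ
      (fun s => ∑ n ∈ Finset.range N, S (n+1) * g s n) {s : ℂ | 0 < s.re} := by
    intro N
    apply Differentiable.differentiableOn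
    apply Differentiable.fun_sum
    intro n _
    exact (differentiable_const _).mul ((hcpowdiff n).sub (hcpowdiff (n+1)))
  have htlu : TendstoLocallyUniformlyOn
      (fun N s => ∑ n ∈ Finset.range N, S (n+1) * g s n) A atTop {s : ℂ | 0 < s.re} := by
    rw [tendstoLocallyUniformlyOn_iff_forall_isCompact hopen]
    intro K hK hKc
    rcases K.eq_empty_or_nonempty with rfl | hne
    · exact tendstoUniformlyOn_empty
    obtain ⟨w, hwK, hwmin⟩ := hKc.exists_isMinOn hne Complex.continuous_re.continuousOn
    obtain ⟨v, hvK, hvmax⟩ := hKc.exists_isMaxOn hne continuous_norm.continuousOn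
    have hw : 0 < w.re := hK hwK
    apply tendstoUniformlyOn_tsum_nat
      (u := fun n => C * ‖v‖ * ((n:ℝ)+1)^(-(w.re+1)))
      ((hsum_rpow _ (by linarith)).mul_left _)
    intro n x hx
    have hx0 : 0 < x.re := hK hx
    calc ‖S (n+1) * g x n‖ ≤ C * ‖x‖ * ((n:ℝ)+1)^(-(x.re+1)) := hterm x hx0 n
      _ ≤ C * ‖v‖ * ((n:ℝ)+1)^(-(w.re+1)) := by
          have h1 : ‖x‖ ≤ ‖v‖ := hvmax hx
          have h2 : ((n:ℝ)+1)^(-(x.re+1)) ≤ ((n:ℝ)+1)^(-(w.re+1)) := by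
            apply Real.rpow_le_rpow_of_exponent_le (by norm_num)
            have := hwmin hx
            simp only [Set.mem_setOf_eq] at this
            linarith [this]
          have hnn : (0:ℝ) ≤ ((n:ℝ)+1)^(-(x.re+1)) := Real.rpow_nonneg (by positivity) _
          calc C * ‖x‖ * ((n:ℝ)+1)^(-(x.re+1)) ≤ C * ‖v‖ * ((n:ℝ)+1)^(-(x.re+1)) := by
                apply mul_le_mul_of_nonneg_right (mul_le_mul_of_nonneg_left h1 hC0) hnn
            _ ≤ C * ‖v‖ * ((n:ℝ)+1)^(-(w.re+1)) := by
                apply mul_le_mul_of_nonneg_left h2 (by positivity)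
  have hDiff : DifferentiableOn ℂ A {s : ℂ | 0 < s.re} :=
    htlu.differentiableOn (Filter.Eventually.of_forall hdiffF) hopen
  refine ⟨A, hDiff.analyticOnNhd hopen, ?_, ?_⟩
  · -- agreement with the Dirichlet series for 1 < re s
    intro s hs
    have hs0 : 0 < s.re := lt_trans one_pos hs
    have hsummable : Summable (fun j : ℕ => z^(j+1) * ((j+1:ℕ):ℂ)^(-s)) := by
      apply Summable.of_norm_bounded (hsum_rpow s.re hs)
      intro j
      rw [norm_mul, norm_pow, hz1, one_pow, one_mul,
        norm_natCast_cpow_of_pos (Nat.succ_pos j), neg_re]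
      have hc : ((j+1:ℕ):ℝ) = (j:ℝ)+1 := by push_cast; ring
      rw [hc]
    exact tendsto_nhds_unique (hT s hs0) hsummable.hasSum.tendsto_sum_nat
  · -- value at 1
    have habs : ‖z‖ = 1 := hz1
    have hrelt : z.re < 1 := by
      rcases lt_or_eq_of_le (le_trans (Complex.re_le_norm z) (le_of_eq habs)) with h | h
      · exact h
      · exfalso
        apply hzne
        have hsq : ‖z‖^2 = z.re * z.re + z.im * z.im := by
          rw [Complex.sq_norm, Complex.normSq_apply]
        rw [habs, h] at hsq
        have him : z.im = 0 := by nlinarith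
        apply Complex.ext <;> simp [h, him]
    have hslit : (1 - z) ∈ Complex.slitPlane := by
      rw [Complex.mem_slitPlane_iff]
      left
      simp only [Complex.sub_re, Complex.one_re]
      linarith
    set f : ℕ → ℂ := fun n => z^n * (n:ℂ)⁻¹ with hfdef
    have hpartial : Tendsto (fun N => ∑ i ∈ Finset.range N, f i) atTop (𝓝 (A 1)) := by
      have h1 := hT 1 (by norm_num)
      have h2 : ∀ N, ∑ i ∈ Finset.range (N+1), f i
          = ∑ n ∈ Finset.range N, z^(n+1) * ((n+1:ℕ):ℂ)^(-(1:ℂ)) := by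
        intro N
        rw [Finset.sum_range_succ']
        have hf0 : f 0 = 0 := by simp [hfdef]
        rw [hf0, add_zero]
        apply Finset.sum_congr rfl
        intro i _
        show z^(i+1) * ((i+1:ℕ):ℂ)⁻¹ = z^(i+1) * ((i+1:ℕ):ℂ)^(-(1:ℂ))
        rw [show (-(1:ℂ)) = ((-1 : ℂ)) from rfl, cpow_neg_one]
      have h3 : Tendsto (fun N => ∑ i ∈ Finset.range (N+1), f i) atTop (𝓝 (A 1)) :=
        h1.congr fun N => (h2 N).symm
      exact (tendsto_add_atTop_iff_nat 1).mp h3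
    have habel := Complex.tendsto_tsum_powerSeries_nhdsWithin_lt hpartial
    rw [tendsto_map'_iff] at habel
    have hbase : Tendsto (fun x : ℝ => (x:ℂ)) (𝓝[<] (1:ℝ)) (𝓝 (1:ℂ)) :=
      (Complex.continuous_ofReal.tendsto 1).mono_left nhdsWithin_le_nhds
    have h1z : Tendsto (fun x : ℝ => 1 - z * (x:ℂ)) (𝓝[<] (1:ℝ)) (𝓝 (1 - z)) := by
      have h := Tendsto.sub
        (tendsto_const_nhds : Tendsto (fun _ : ℝ => (1:ℂ)) (𝓝[<] (1:ℝ)) (𝓝 1))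
        (hbase.const_mul z)
      simpa using h
    have hcont : Tendsto (fun x : ℝ => -Complex.log (1 - z * (x:ℂ))) (𝓝[<] (1:ℝ))
        (𝓝 (-Complex.log (1 - z))) :=
      ((continuousAt_clog hslit).tendsto.comp h1z).neg
    have hEq : (fun x : ℝ => ∑' n, f n * ((x:ℂ))^n)
        =ᶠ[𝓝[<] (1:ℝ)] (fun x : ℝ => -Complex.log (1 - z * (x:ℂ))) := by
      have hmem : Set.Ioo (-1:ℝ) 1 ∈ 𝓝[<] (1:ℝ) :=
        Ioo_mem_nhdsLT_of_mem ⟨by norm_num, le_rfl⟩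
      filter_upwards [hmem] with x hx
      have hxn : ‖(x:ℂ)‖ < 1 := by
        rw [Complex.norm_real]
        exact abs_lt.mpr ⟨hx.1, hx.2⟩
      have hzx : ‖z * (x:ℂ)‖ < 1 := by rw [norm_mul, hz1, one_mul]; exact hxn
      have hts := Complex.hasSum_taylorSeries_neg_log hzx
      rw [← hts.tsum_eq]
      apply tsum_congr
      intro n
      rw [hfdef]
      simp only
      rw [mul_pow, div_eq_mul_inv]
      ring
    have hlim2 : Tendsto (fun x : ℝ => ∑' n, f n * ((x:ℂ))^n) (𝓝[<] (1:ℝ))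
        (𝓝 (-Complex.log (1 - z))) := hcont.congr' hEq.symm
    have hA1 : A 1 = -Complex.log (1 - z) := tendsto_nhds_unique habel hlim2
    rw [hA1, one_div, Complex.log_inv]
    intro harg
    rw [Complex.arg_eq_pi_iff] at harg
    have : (1 - z).re = 1 - z.re := by simp [Complex.sub_re]
    rw [this] at harg
    linarith [harg.1]

theorem stmt_6 (m ℓ : ℕ) (hm : 2 ≤ m) (hl1 : 1 ≤ ℓ) (hlm : ℓ ≤ m - 1) :
    ∃ A : ℂ → ℂ,
      AnalyticOnNhd ℂ A {s : ℂ | 0 < s.re} ∧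
      (∀ s : ℂ, 1 < s.re →
        A s = ∑' j : ℕ,
          (Complex.exp (2 * Real.pi * Complex.I / m)) ^ (ℓ * (j + 1)) *
            ((j + 1 : ℕ) : ℂ) ^ (-s)) ∧
      A 1 = Complex.log (1 / (1 - (Complex.exp (2 * Real.pi * Complex.I / m)) ^ ℓ)) := by
  have h : (Complex.exp (2 * Real.pi * Complex.I / m)) ^ ℓ
      = Complex.exp (((2 * Real.pi * ℓ / m : ℝ) : ℂ) * Complex.I) := by
    rw [← Complex.exp_nat_mul]
    congr 1
    push_cast
    ring
  have hz1 : ‖(Complex.exp (2 * Real.pi * Complex.I / m)) ^ ℓ‖ = 1 := by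
    rw [h, Complex.norm_exp_ofReal_mul_I]
  have hzne : (Complex.exp (2 * Real.pi * Complex.I / m)) ^ ℓ ≠ 1 := by
    rw [h]
    intro hone
    rw [Complex.exp_eq_one_iff] at hone
    obtain ⟨n, hn⟩ := hone
    have hI : (Complex.I : ℂ) ≠ 0 := Complex.I_ne_zero
    have h2 : ((2 * Real.pi * ℓ / m : ℝ) : ℂ) = (n : ℂ) * (2 * Real.pi) := by
      apply mul_right_cancel₀ hI
      rw [hn]; ring
    have h3 : (2 * Real.pi * ℓ / m : ℝ) = (n : ℝ) * (2 * Real.pi) := by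
      exact_mod_cast h2
    have hmpos : (0:ℝ) < m := by positivity
    have hpi : (0:ℝ) < Real.pi := Real.pi_pos
    have hℓm : (ℓ:ℝ) < m := by
      have : ℓ < m := by omega
      exact_mod_cast this
    have hℓpos : (0:ℝ) < ℓ := by exact_mod_cast hl1
    have h2pi : (0:ℝ) < 2*Real.pi := by positivity
    have hnm : (ℓ:ℝ) = (n:ℝ) * m := by
      field_simp at h3
      linear_combination h3
    rcases le_or_gt n 0 with hn0 | hn0
    · have : (n:ℝ) ≤ 0 := by exact_mod_cast hn0
      nlinarith
    · have hn1 : (1:ℝ) ≤ n := by exact_mod_cast hn0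
      nlinarith
  obtain ⟨A, hA1, hA2, hA3⟩ := aux_core _ hz1 hzne
  refine ⟨A, hA1, ?_, hA3⟩
  intro s hs
  rw [hA2 s hs]
  apply tsum_congr
  intro j
  rw [pow_mul]
end

section
/- Let τ(k) = Σ_{d | k} 1 be the number-of-divisors function and γ Euler's constant. Then, as real α → 0⁺, Σ_{k=1}^{∞} τ(k) e^{−kα} = α^{−1} log(α^{−1}) + γ α^{−1} + O(1). -/
open Real Set MeasureTheory Filter Asymptotics


lemma nonneg_of_deriv (G g : ℝ → ℝ) (hG0 : G 0 = 0)
    (hd : ∀ x, HasDerivAt G (g x) x) (hg : ∀ x, 0 ≤ x → 0 ≤ g x) :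
    ∀ t, 0 ≤ t → 0 ≤ G t := by
  intro t ht
  have hmono : MonotoneOn G (Set.Ici 0) := by
    apply monotoneOn_of_deriv_nonneg (convex_Ici 0)
    · exact fun x _ => (hd x).continuousAt.continuousWithinAt
    · exact fun x _ => (hd x).differentiableAt.differentiableWithinAt
    · intro x hx
      rw [interior_Ici] at hx
      rw [(hd x).deriv]
      exact hg x hx.le
  have := hmono (self_mem_Ici) (mem_Ici.2 ht) ht
  rwa [hG0] at this

lemma exp_neg_hasDerivAt (x : ℝ) : HasDerivAt (fun t : ℝ => Real.exp (-t)) (-Real.exp (-x)) x := by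
  simpa [Function.comp_def] using (Real.hasDerivAt_exp (-x)).comp x (hasDerivAt_neg x)

lemma taylor1 (t : ℝ) : 1 - t ≤ Real.exp (-t) := by
  have := Real.add_one_le_exp (-t); linarith

lemma taylor2 (t : ℝ) (ht : 0 ≤ t) : Real.exp (-t) ≤ 1 - t + t^2/2 := by
  have := nonneg_of_deriv (fun t => 1 - t + t^2/2 - Real.exp (-t))
    (fun x => -1 + x + Real.exp (-x)) (by norm_num)
    (fun x => by
      have h1 : HasDerivAt (fun t : ℝ => 1 - t + t^2/2) (-1 + x) x := by
        have : HasDerivAt (fun t : ℝ => 1 - t + t^2/2) (0 - 1 + 2*x^1/2) x := by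
          exact (((hasDerivAt_const x (1:ℝ)).sub (hasDerivAt_id x)).add
            ((hasDerivAt_pow 2 x).div_const 2))
        simpa using this
      exact (h1.sub (exp_neg_hasDerivAt x)).congr_deriv (by ring))
    (fun x hx => by have := taylor1 x; show 0 ≤ -1 + x + Real.exp (-x); linarith) t ht
  linarith

lemma taylor3 (t : ℝ) (ht : 0 ≤ t) : 1 - t + t^2/2 - t^3/6 ≤ Real.exp (-t) := by
  have := nonneg_of_deriv (fun t => Real.exp (-t) - (1 - t + t^2/2 - t^3/6))
    (fun x => -Real.exp (-x) + 1 - x + x^2/2) (by norm_num)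
    (fun x => by
      have h1 : HasDerivAt (fun t : ℝ => 1 - t + t^2/2 - t^3/6) (-1 + x - x^2/2) x := by
        have : HasDerivAt (fun t : ℝ => 1 - t + t^2/2 - t^3/6)
            (0 - 1 + 2*x^1/2 - 3*x^2/6) x :=
          (((hasDerivAt_const x (1:ℝ)).sub (hasDerivAt_id x)).add
            ((hasDerivAt_pow 2 x).div_const 2)).sub ((hasDerivAt_pow 3 x).div_const 6)
        convert this using 1; ring
      have := (exp_neg_hasDerivAt x).sub h1
      exact this.congr_deriv (by ring))
    (fun x hx => by have := taylor2 x hx; show 0 ≤ -Real.exp (-x) + 1 - x + x^2/2; linarith) t ht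
  linarith

lemma taylor4 (t : ℝ) (ht : 0 ≤ t) : Real.exp (-t) ≤ 1 - t + t^2/2 - t^3/6 + t^4/24 := by
  have := nonneg_of_deriv (fun t => (1 - t + t^2/2 - t^3/6 + t^4/24) - Real.exp (-t))
    (fun x => (-1 + x - x^2/2 + x^3/6) + Real.exp (-x)) (by norm_num)
    (fun x => by
      have h1 : HasDerivAt (fun t : ℝ => 1 - t + t^2/2 - t^3/6 + t^4/24)
          (-1 + x - x^2/2 + x^3/6) x := by
        have : HasDerivAt (fun t : ℝ => 1 - t + t^2/2 - t^3/6 + t^4/24)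
            (0 - 1 + 2*x^1/2 - 3*x^2/6 + 4*x^3/24) x :=
          ((((hasDerivAt_const x (1:ℝ)).sub (hasDerivAt_id x)).add
            ((hasDerivAt_pow 2 x).div_const 2)).sub ((hasDerivAt_pow 3 x).div_const 6)).add
            ((hasDerivAt_pow 4 x).div_const 24)
        convert this using 1; ring
      have := h1.sub (exp_neg_hasDerivAt x)
      exact this.congr_deriv (by ring))
    (fun x hx => by have := taylor3 x hx; show 0 ≤ (-1 + x - x^2/2 + x^3/6) + Real.exp (-x); linarith) t ht
  linarith

lemma taylor5 (t : ℝ) (ht : 0 ≤ t) :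
    1 - t + t^2/2 - t^3/6 + t^4/24 - t^5/120 ≤ Real.exp (-t) := by
  have := nonneg_of_deriv
    (fun t => Real.exp (-t) - (1 - t + t^2/2 - t^3/6 + t^4/24 - t^5/120))
    (fun x => -Real.exp (-x) + (1 - x + x^2/2 - x^3/6 + x^4/24)) (by norm_num)
    (fun x => by
      have h1 : HasDerivAt (fun t : ℝ => 1 - t + t^2/2 - t^3/6 + t^4/24 - t^5/120)
          (-1 + x - x^2/2 + x^3/6 - x^4/24) x := by
        have : HasDerivAt (fun t : ℝ => 1 - t + t^2/2 - t^3/6 + t^4/24 - t^5/120)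
            (0 - 1 + 2*x^1/2 - 3*x^2/6 + 4*x^3/24 - 5*x^4/120) x :=
          (((((hasDerivAt_const x (1:ℝ)).sub (hasDerivAt_id x)).add
            ((hasDerivAt_pow 2 x).div_const 2)).sub ((hasDerivAt_pow 3 x).div_const 6)).add
            ((hasDerivAt_pow 4 x).div_const 24)).sub ((hasDerivAt_pow 5 x).div_const 120)
        convert this using 1; ring
      have := (exp_neg_hasDerivAt x).sub h1
      exact this.congr_deriv (by ring))
    (fun x hx => by have := taylor4 x hx; show 0 ≤ -Real.exp (-x) + (1 - x + x^2/2 - x^3/6 + x^4/24); linarith) t ht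
  linarith


lemma Spos (t : ℝ) (h0 : 0 ≤ t) (h2 : t ≤ 2) :
    0 ≤ 5/12 - t/3 + 59*t^2/360 - 23*t^3/360 + 17*t^4/960 - 11*t^5/2880 + t^6/1600 - t^7/14400 := by
  nlinarith [sq_nonneg (t-2), sq_nonneg (t-1), sq_nonneg t, pow_le_pow_left₀ h0 h2 2, sq_nonneg (t^2-2*t), sq_nonneg (t^3), mul_nonneg h0 h0]

lemma keyineq (t u : ℝ) (ht : 0 ≤ t) (ht2 : t ≤ 2) (hu0 : 0 ≤ u)
    (hq : u ≤ t - t^2/2 + t^3/6 - t^4/24 + t^5/120) :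
    (1+t)*u^2 ≤ t^2 := by
  have hS := Spos t ht ht2
  have h1 : (1+t)*u^2 ≤ (1+t)*(t - t^2/2 + t^3/6 - t^4/24 + t^5/120)^2 := by
    apply mul_le_mul_of_nonneg_left _ (by linarith)
    exact pow_le_pow_left₀ hu0 hq 2
  have h2 : (1+t)*(t - t^2/2 + t^3/6 - t^4/24 + t^5/120)^2
      = t^2 - t^4 * (5/12 - t/3 + 59*t^2/360 - 23*t^3/360 + 17*t^4/960 - 11*t^5/2880 + t^6/1600 - t^7/14400) := by
    ring
  nlinarith [pow_nonneg ht 4]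


noncomputable def hh (t : ℝ) : ℝ := if t ≤ 0 then 1/2 else (Real.exp t - 1)⁻¹ - Real.exp (-t) / t

lemma one_sub_exp_neg_le (t : ℝ) : 1 - Real.exp (-t) ≤ t := by
  have := Real.add_one_le_exp (-t); linarith

lemma exp_sub_one_pos {t : ℝ} (ht : 0 < t) : 0 < Real.exp t - 1 := by
  have := Real.add_one_lt_exp (ne_of_gt ht); linarith

lemma hh_pos_eq {t : ℝ} (ht : 0 < t) : hh t = (Real.exp t - 1)⁻¹ - Real.exp (-t) / t := by
  simp [hh, not_le.2 ht]

lemma hh_zero : hh 0 = 1/2 := by simp [hh]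

lemma hh_nonneg (t : ℝ) : 0 ≤ hh t := by
  rcases le_or_gt t 0 with h | h
  · simp [hh, h]
  · rw [hh_pos_eq h, sub_nonneg, div_le_iff₀ h]
    rw [inv_mul_eq_div, le_div_iff₀ (exp_sub_one_pos h)]
    have heq : Real.exp (-t) * (Real.exp t - 1) = 1 - Real.exp (-t) := by
      rw [Real.exp_neg]; field_simp
    rw [heq]
    exact one_sub_exp_neg_le t

lemma hh_le_half (t : ℝ) : hh t ≤ 1/2 := by
  rcases le_or_gt t 0 with h | h
  · simp [hh, h]
  · rw [hh_pos_eq h, Real.exp_neg]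
    set E := Real.exp t with hE
    have hE1 : 1 + t ≤ E := by have := Real.add_one_le_exp t; linarith
    have hE0 : (0:ℝ) < E := Real.exp_pos t
    have hA : (0:ℝ) < E - 1 := by linarith
    have hinv : E⁻¹ ≤ 1 - t + t^2/2 := by
      rw [← Real.exp_neg]; exact taylor2 t h.le
    have h1 : 1 ≤ E * (1 - t + t^2/2) := by
      calc (1:ℝ) = E * E⁻¹ := by rw [mul_inv_cancel₀ (ne_of_gt hE0)]
      _ ≤ E * (1 - t + t^2/2) := by
          exact mul_le_mul_of_nonneg_left hinv hE0.le
    have heq : (E - 1)⁻¹ - E⁻¹/t = (t*E - E + 1)/(t*E*(E-1)) := by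
      field_simp; ring
    rw [heq, div_le_iff₀ (by positivity)]
    nlinarith [mul_nonneg (mul_nonneg h.le hE0.le) (by linarith : (0:ℝ) ≤ E - 1 - t)]

lemma key2 (x : ℝ) (hx : 0 < x) : (1+x)*(1 - Real.exp (-x))^2 ≤ x^2 := by
  set u := 1 - Real.exp (-x) with hu
  have hexple : Real.exp (-x) ≤ 1 := by
    rw [Real.exp_le_one_iff]; linarith
  have hu0 : 0 ≤ u := by rw [hu]; linarith
  rcases le_or_gt x 2 with h2 | h2
  · have hq : u ≤ x - x^2/2 + x^3/6 - x^4/24 + x^5/120 := by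
      have := taylor5 x hx.le; rw [hu]; linarith
    exact keyineq x u hx.le h2 hu0 hq
  · have hu1 : u ≤ 1 := by have := Real.exp_pos (-x); rw [hu]; linarith
    have hu2 : u^2 ≤ 1 := by nlinarith
    have h3 : (1+x)*u^2 ≤ 1+x := by nlinarith
    nlinarith [sq_nonneg (x-1)]

lemma hh_hasDerivAt {x : ℝ} (hx : 0 < x) :
    HasDerivAt hh (-Real.exp x/(Real.exp x - 1)^2 + Real.exp (-x)*(x+1)/x^2) x := by
  have d1 : HasDerivAt (fun t : ℝ => (Real.exp t - 1)⁻¹)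
      (-Real.exp x/(Real.exp x - 1)^2) x := by
    simpa [Pi.inv_def] using ((Real.hasDerivAt_exp x).sub_const 1).inv (ne_of_gt (exp_sub_one_pos hx))
  have d2 : HasDerivAt (fun t : ℝ => Real.exp (-t) / t)
      ((-Real.exp (-x) * x - Real.exp (-x) * 1)/x^2) x :=
    (exp_neg_hasDerivAt x).div (hasDerivAt_id x) (ne_of_gt hx)
  have := d1.sub d2
  have heq : hh =ᶠ[nhds x] fun t => (Real.exp t - 1)⁻¹ - Real.exp (-t) / t := by
    filter_upwards [Ioi_mem_nhds hx] with t ht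
    exact hh_pos_eq ht
  refine (HasDerivAt.congr_of_eventuallyEq ?_ heq)
  exact this.congr_deriv (by field_simp; ring)


lemma hh_deriv_nonpos {x : ℝ} (hx : 0 < x) :
    -Real.exp x/(Real.exp x - 1)^2 + Real.exp (-x)*(x+1)/x^2 ≤ 0 := by
  have hA := exp_sub_one_pos hx
  have hkey := key2 x hx
  have h1 : Real.exp (-x)*(x+1)/x^2 ≤ Real.exp x/(Real.exp x - 1)^2 := by
    rw [div_le_div_iff₀ (by positivity) (by positivity)]
    have hid : Real.exp (-x) * (Real.exp x - 1)^2 = Real.exp x * (1 - Real.exp (-x))^2 := by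
      rw [Real.exp_neg]; field_simp
    calc Real.exp (-x)*(x+1)*(Real.exp x - 1)^2
        = (x+1)*(Real.exp (-x)*(Real.exp x - 1)^2) := by ring
      _ = Real.exp x * ((1+x)*(1 - Real.exp (-x))^2) := by rw [hid]; ring
      _ ≤ Real.exp x * x^2 := mul_le_mul_of_nonneg_left hkey (Real.exp_pos x).le
  rw [neg_div]
  linarith

lemma hh_antitoneOn : AntitoneOn hh (Set.Ici 0) := by
  have hIoi : AntitoneOn hh (Set.Ioi 0) := by
    apply antitoneOn_of_deriv_nonpos (convex_Ioi 0)
    · exact fun x hx => (hh_hasDerivAt hx).continuousAt.continuousWithinAt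
    · intro x hx
      rw [interior_Ioi] at hx
      exact (hh_hasDerivAt hx).differentiableAt.differentiableWithinAt
    · intro x hx
      rw [interior_Ioi] at hx
      rw [(hh_hasDerivAt hx).deriv]
      exact hh_deriv_nonpos hx
  intro a ha b hb hab
  rcases eq_or_lt_of_le (mem_Ici.1 ha) with h0 | h0
  · rw [← h0, hh_zero]
    exact hh_le_half b
  · exact hIoi h0 (mem_Ioi.2 (lt_of_lt_of_le h0 hab)) hab


lemma exp_sub_one_pos' {t : ℝ} (ht : 0 < t) : 0 < Real.exp t - 1 := by
  have := Real.add_one_lt_exp (ne_of_gt ht); linarith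

lemma hasSum_exp_mul_good {c : ℝ} (hc : 0 < c) :
    HasSum (fun m : ℕ => Real.exp (-(((m : ℝ)+1)*c))) ((Real.exp c - 1)⁻¹) := by
  set r := Real.exp (-c) with hr
  have hr0 : 0 < r := Real.exp_pos _
  have hr1 : r < 1 := Real.exp_lt_one_iff.2 (by linarith)
  have h := (hasSum_geometric_of_lt_one hr0.le hr1).mul_left r
  have hEc := exp_sub_one_pos' hc
  have hval : r * (1 - r)⁻¹ = (Real.exp c - 1)⁻¹ := by
    rw [hr, Real.exp_neg]
    have hE : (0:ℝ) < Real.exp c := Real.exp_pos c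
    field_simp
  have hfun : (fun m : ℕ => r * r ^ m) = fun m : ℕ => Real.exp (-(((m:ℝ)+1)*c)) := by
    funext m
    rw [← pow_succ', hr, ← Real.exp_nat_mul]
    congr 1
    push_cast
    ring
  rw [hval, hfun] at h
  exact h

lemma card_filter_eq_tau (k : ℕ) :
    ((Finset.range (k+1)).filter (fun d => (d+1) ∣ (k+1))).card = (k+1).divisors.card := by
  apply Finset.card_bij (fun d _ => d+1)
  · intro a ha
    simp only [Finset.mem_filter, Finset.mem_range] at ha
    exact Nat.mem_divisors.2 ⟨ha.2, Nat.succ_ne_zero k⟩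
  · intro a₁ _ a₂ _ h
    omega
  · intro b hb
    rw [Nat.mem_divisors] at hb
    have hb0 : 0 < b := Nat.pos_of_dvd_of_pos hb.1 (Nat.succ_pos k)
    have hble : b ≤ k+1 := Nat.le_of_dvd (Nat.succ_pos k) hb.1
    refine ⟨b-1, ?_, by omega⟩
    simp only [Finset.mem_filter, Finset.mem_range]
    constructor
    · omega
    · have : b - 1 + 1 = b := by omega
      rw [this]; exact hb.1

set_option maxHeartbeats 1000000 in
lemma rearrange {α : ℝ} (hα : 0 < α) :
    ∑' k : ℕ, (((k + 1).divisors.card : ℝ)) * Real.exp (-(((k : ℝ) + 1) * α))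
      = ∑' d : ℕ, (Real.exp (((d : ℝ)+1)*α) - 1)⁻¹ := by
  set x := Real.exp (-α) with hxdef
  have hx0 : 0 < x := Real.exp_pos _
  have hx1 : x < 1 := Real.exp_lt_one_iff.2 (by linarith)
  set y := Real.exp (-(α/2)) with hydef
  have hy0 : 0 < y := Real.exp_pos _
  have hy1 : y < 1 := Real.exp_lt_one_iff.2 (by linarith)
  have hyx : y * y = x := by
    rw [hydef, hxdef, ← Real.exp_add]; ring_nf
  set F : ℕ × ℕ → ℝ := fun p => if (p.1+1) ∣ (p.2+1) then x^(p.2+1) else 0 with hFdef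
  have hFnn : ∀ p, 0 ≤ F p := by
    intro p
    simp only [hFdef]
    split
    · positivity
    · exact le_refl 0
  have hFle : ∀ p, F p ≤ y^(p.1+1) * y^(p.2+1) := by
    intro ⟨d, k⟩
    simp only [hFdef]
    split
    · rename_i hdvd
      have hle : d+1 ≤ k+1 := Nat.le_of_dvd (Nat.succ_pos k) hdvd
      have : x^(k+1) = y^(k+1) * y^(k+1) := by rw [← mul_pow, hyx]
      rw [this]
      exact mul_le_mul_of_nonneg_right (pow_le_pow_of_le_one hy0.le hy1.le hle)
        (by positivity)
    · positivity
  have hsumy : Summable (fun d : ℕ => y^(d+1)) := by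
    have := (summable_geometric_of_lt_one hy0.le hy1).mul_left y
    apply this.congr
    intro n
    rw [← pow_succ']
  have hG : Summable (fun p : ℕ × ℕ => y^(p.1+1) * y^(p.2+1)) :=
    hsumy.mul_of_nonneg hsumy (fun _ => by positivity) (fun _ => by positivity)
  have hF : Summable F := Summable.of_nonneg_of_le hFnn hFle hG
  -- group by k (second coordinate)
  have hperk : ∀ k : ℕ, HasSum (fun d => F (d, k))
      (((k + 1).divisors.card : ℝ) * x^(k+1)) := by
    intro k
    have hzero : ∀ d ∉ Finset.range (k+1), F (d, k) = 0 := by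
      intro d hd
      simp only [Finset.mem_range, not_lt] at hd
      simp only [hFdef, ite_eq_right_iff]
      intro hdvd
      exact absurd (Nat.le_of_dvd (Nat.succ_pos k) hdvd) (by omega)
    have h := hasSum_sum_of_ne_finset_zero (L := SummationFilter.unconditional ℕ) (f := fun d => F (d, k)) hzero
    have hval : ∑ d ∈ Finset.range (k+1), F (d, k)
        = ((k + 1).divisors.card : ℝ) * x^(k+1) := by
      simp only [hFdef]
      rw [← Finset.sum_filter, Finset.sum_const, card_filter_eq_tau, nsmul_eq_mul]
    rwa [hval] at h
  -- per d (first coordinate)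
  have hperd : ∀ d : ℕ, HasSum (fun k => F (d, k))
      ((Real.exp (((d:ℝ)+1)*α) - 1)⁻¹) := by
    intro d
    have hsummable : Summable (fun k => F (d, k)) :=
      hF.comp_injective (fun k₁ k₂ h => by simpa using congrArg Prod.snd h :
        Function.Injective (fun k => ((d, k) : ℕ × ℕ)))
    have hts : ∑' k, F (d, k) = (Real.exp (((d:ℝ)+1)*α) - 1)⁻¹ := by
      have hinj : Function.Injective (fun j : ℕ => (d+1)*j + d) := by
        intro a b h
        simp only at h
        have h2 : (d+1)*a = (d+1)*b := by omega
        exact Nat.eq_of_mul_eq_mul_left d.succ_pos h2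
      have hsupp : Function.support (fun k => F (d, k)) ⊆
          Set.range (fun j : ℕ => (d+1)*j + d) := by
        intro k hk
        simp only [Function.mem_support, hFdef, ne_eq, ite_eq_right_iff, not_forall] at hk
        obtain ⟨hdvd, -⟩ := hk
        obtain ⟨m, hm⟩ := hdvd
        have hm1 : 1 ≤ m := by
          rcases Nat.eq_zero_or_pos m with h0 | h
          · rw [h0, Nat.mul_zero] at hm; omega
          · exact h
        obtain ⟨m', rfl⟩ : ∃ m', m = m' + 1 := ⟨m-1, by omega⟩
        rw [Nat.mul_succ] at hm
        exact ⟨m', by simp only; omega⟩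
      have := Function.Injective.tsum_eq hinj (f := fun k => F (d, k)) hsupp
      rw [← this]
      have hc : 0 < ((d:ℝ)+1)*α := by positivity
      have hgeo := hasSum_exp_mul_good hc
      have hfun : (fun j : ℕ => F (d, (d+1)*j + d))
          = fun j : ℕ => Real.exp (-(((j:ℝ)+1)*(((d:ℝ)+1)*α))) := by
        funext j
        have hdvd : (d+1) ∣ ((d+1)*j + d + 1) := ⟨j+1, by ring⟩
        simp only [hFdef, if_pos hdvd, hxdef]
        rw [← Real.exp_nat_mul]
        congr 1
        push_cast
        ring
      rw [hfun, hgeo.tsum_eq]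
    exact hsummable.hasSum_iff.mpr hts
  -- assemble
  have h1 : ∑' p : ℕ × ℕ, F p = ∑' d : ℕ, (Real.exp (((d:ℝ)+1)*α) - 1)⁻¹ := by
    rw [Summable.tsum_prod' hF (fun d => (hperd d).summable)]
    exact tsum_congr fun d => (hperd d).tsum_eq
  have h2 : ∑' p : ℕ × ℕ, F p = ∑' k : ℕ, ((k + 1).divisors.card : ℝ) * x^(k+1) := by
    rw [← (Equiv.prodComm ℕ ℕ).tsum_eq F]
    have hFs : Summable (F ∘ (Equiv.prodComm ℕ ℕ)) := by
      apply hF.comp_injective (Equiv.injective _)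
    rw [show (fun c : ℕ × ℕ => F ((Equiv.prodComm ℕ ℕ) c)) = F ∘ (Equiv.prodComm ℕ ℕ) from rfl,
      Summable.tsum_prod' hFs (fun k => (hperk k).summable)]
    exact tsum_congr fun k => (hperk k).tsum_eq
  have h3 : ∀ k : ℕ, ((k + 1).divisors.card : ℝ) * x^(k+1)
      = ((k + 1).divisors.card : ℝ) * Real.exp (-(((k : ℝ) + 1) * α)) := by
    intro k
    rw [hxdef, ← Real.exp_nat_mul]
    congr 2
    push_cast
    ring
  calc ∑' k : ℕ, (((k + 1).divisors.card : ℝ)) * Real.exp (-(((k : ℝ) + 1) * α))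
      = ∑' k : ℕ, ((k + 1).divisors.card : ℝ) * x^(k+1) :=
        tsum_congr fun k => (h3 k).symm
    _ = ∑' p : ℕ × ℕ, F p := h2.symm
    _ = ∑' d : ℕ, (Real.exp (((d:ℝ)+1)*α) - 1)⁻¹ := h1



noncomputable def gg (m : ℕ) (t : ℝ) : ℝ :=
  Real.exp (-(((m:ℝ)+1)*t)) * (1 - (1 - Real.exp (-t))/t)

lemma integral_exp_neg_mul {c : ℝ} (hc : 0 < c) :
    ∫ t in Ioi (0:ℝ), Real.exp (-(c*t)) = c⁻¹ := by
  have h := MeasureTheory.integral_comp_mul_left_Ioi (fun x => Real.exp (-x)) 0 hc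
  simp only [mul_zero] at h
  rw [integral_exp_neg_Ioi] at h
  simp only [neg_zero, Real.exp_zero, smul_eq_mul, mul_one] at h
  exact h

lemma integrableOn_exp_neg_mul {c : ℝ} (hc : 0 < c) :
    IntegrableOn (fun t => Real.exp (-(c*t))) (Ioi (0:ℝ)) := by
  have := exp_neg_integrableOn_Ioi 0 hc
  simpa [neg_mul] using this

lemma gg_nonneg {m : ℕ} {t : ℝ} (ht : 0 < t) : 0 ≤ gg m t := by
  unfold gg
  apply mul_nonneg (Real.exp_pos _).le
  rw [sub_nonneg, div_le_one ht]
  have := Real.add_one_le_exp (-t); linarith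

lemma gg_le {m : ℕ} {t : ℝ} (ht : 0 < t) : gg m t ≤ Real.exp (-(((m:ℝ)+1)*t)) := by
  unfold gg
  have h1 : 1 - (1 - Real.exp (-t))/t ≤ 1 := by
    have h2 : 0 ≤ (1 - Real.exp (-t))/t := by
      apply div_nonneg _ ht.le
      have := Real.exp_lt_one_iff.2 (by linarith : -t < 0); linarith
    linarith
  nlinarith [Real.exp_pos (-(((m:ℝ)+1)*t))]

lemma gg_meas (m : ℕ) : Measurable (gg m) := by
  unfold gg
  exact (Real.measurable_exp.comp (measurable_id.const_mul _).neg).mul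
    ((measurable_const.sub ((measurable_const.sub
      (Real.measurable_exp.comp measurable_id.neg)).div measurable_id)))

lemma gg_integrableOn (m : ℕ) : IntegrableOn (gg m) (Ioi (0:ℝ)) := by
  apply Integrable.mono (integrableOn_exp_neg_mul
    (by positivity : (0:ℝ) < (m:ℝ)+1)) ((gg_meas m).aestronglyMeasurable.restrict)
  rw [ae_restrict_iff' measurableSet_Ioi]
  filter_upwards with t ht
  rw [Real.norm_eq_abs, Real.norm_eq_abs, abs_of_nonneg (gg_nonneg ht),
    abs_of_nonneg (Real.exp_pos _).le]
  exact gg_le ht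

lemma gg_eq_inner_integral {m : ℕ} {t : ℝ} (ht : 0 < t) :
    gg m t = ∫ u in Ioc ((m:ℝ)+1) ((m:ℝ)+2), (Real.exp (-(((m:ℝ)+1)*t)) - Real.exp (-(u*t))) := by
  rw [← intervalIntegral.integral_of_le (by linarith)]
  have h2 : ∫ u in ((m:ℝ)+1)..((m:ℝ)+2), Real.exp (-(u*t))
      = (Real.exp (-(((m:ℝ)+1)*t)) - Real.exp (-(((m:ℝ)+2)*t)))/t := by
    have h := intervalIntegral.integral_comp_mul_left (a := (m:ℝ)+1) (b := (m:ℝ)+2)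
      (fun v => Real.exp v) (c := -t) (by linarith)
    simp only [smul_eq_mul] at h
    rw [show (fun u : ℝ => Real.exp (-(u*t))) = fun u : ℝ => Real.exp (-t*u) from
      funext fun u => by ring_nf]
    rw [h, integral_exp, show -t*((m:ℝ)+1) = -(((m:ℝ)+1)*t) by ring,
      show -t*((m:ℝ)+2) = -(((m:ℝ)+2)*t) by ring]
    field_simp [ht.ne']
    ring
  rw [intervalIntegral.integral_sub (by apply intervalIntegrable_const)
    ?_, intervalIntegral.integral_const, h2]
  · unfold gg
    have hbt : Real.exp (-(((m:ℝ)+2)*t)) = Real.exp (-(((m:ℝ)+1)*t)) * Real.exp (-t) := by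
      rw [← Real.exp_add]; ring_nf
    rw [hbt]
    field_simp
    ring
  · apply Continuous.intervalIntegrable
    exact Real.continuous_exp.comp (continuous_id.mul continuous_const).neg

lemma integral_gg (m : ℕ) :
    ∫ t in Ioi (0:ℝ), gg m t
      = ((m:ℝ)+1)⁻¹ - (Real.log ((m:ℝ)+2) - Real.log ((m:ℝ)+1)) := by
  set a : ℝ := (m:ℝ)+1 with hadef
  set b : ℝ := (m:ℝ)+2 with hbdef
  have ha : 0 < a := by positivity
  have hb : 0 < b := by positivity
  have hab : a ≤ b := by rw [hadef, hbdef]; linarith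
  set f : ℝ → ℝ → ℝ := fun t u => Real.exp (-(a*t)) - Real.exp (-(u*t)) with hfdef
  have hcont : Continuous (Function.uncurry f) := by
    apply Continuous.sub
    · exact Real.continuous_exp.comp ((continuous_const.mul continuous_fst).neg)
    · exact Real.continuous_exp.comp ((continuous_snd.mul continuous_fst).neg)
  have hfle : ∀ t u : ℝ, 0 < t → a ≤ u → ‖f t u‖ ≤ Real.exp (-(a*t)) := by
    intro t u ht hu
    rw [Real.norm_eq_abs, abs_of_nonneg]
    · have : Real.exp (-(u*t)) > 0 := Real.exp_pos _
      simp only [hfdef]; linarith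
    · simp only [hfdef, sub_nonneg]
      apply Real.exp_le_exp.2
      nlinarith
  have hint : Integrable (Function.uncurry f)
      ((volume.restrict (Ioi (0:ℝ))).prod (volume.restrict (Ioc a b))) := by
    rw [integrable_prod_iff hcont.aestronglyMeasurable]
    constructor
    · filter_upwards with t
      exact (Continuous.integrableOn_Ioc (by
        exact Real.continuous_exp.comp (continuous_const.mul continuous_const).neg |>.sub
          (Real.continuous_exp.comp ((continuous_id.mul continuous_const).neg)) ))
    · apply Integrable.mono (integrableOn_exp_neg_mul ha)
      · exact (hcont.aestronglyMeasurable.norm).integral_prod_right'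
      · rw [ae_restrict_iff' measurableSet_Ioi]
        filter_upwards with t ht
        have h1 : ∫ u in Ioc a b, ‖f t u‖ ≤ ∫ u in Ioc a b, Real.exp (-(a*t)) := by
          apply setIntegral_mono_on
          · exact (hcont.comp (Continuous.prodMk_right t)).norm.integrableOn_Ioc
          · exact integrableOn_const (by simp [measure_Ioc_lt_top])
          · exact measurableSet_Ioc
          · intro u hu
            exact hfle t u ht (le_of_lt hu.1)
        have h2 : ∫ u in Ioc a b, Real.exp (-(a*t)) = Real.exp (-(a*t)) := by
          rw [setIntegral_const]
          rw [Real.volume_real_Ioc_of_le hab]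
          rw [show b - a = 1 by rw [hadef, hbdef]; ring]
          simp
        rw [Real.norm_eq_abs, abs_of_nonneg]
        · rw [Real.norm_eq_abs, abs_of_nonneg (Real.exp_pos _).le]
          calc ∫ u in Ioc a b, ‖f t u‖ ≤ _ := h1
            _ = _ := h2
        · exact integral_nonneg fun u => norm_nonneg _
  have hswap := integral_integral_swap hint
  have hLHS : ∫ t in Ioi (0:ℝ), ∫ u in Ioc a b, f t u = ∫ t in Ioi (0:ℝ), gg m t := by
    apply integral_congr_ae
    filter_upwards [ae_restrict_mem measurableSet_Ioi] with t ht
    exact (gg_eq_inner_integral ht).symm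
  have hRHS : ∫ u in Ioc a b, ∫ t in Ioi (0:ℝ), f t u
      = ((m:ℝ)+1)⁻¹ - (Real.log ((m:ℝ)+2) - Real.log ((m:ℝ)+1)) := by
    have hper : ∀ u ∈ Ioc a b, ∫ t in Ioi (0:ℝ), f t u = a⁻¹ - u⁻¹ := by
      intro u hu
      have hu0 : 0 < u := lt_trans ha hu.1
      rw [integral_sub (integrableOn_exp_neg_mul ha) (integrableOn_exp_neg_mul hu0),
        integral_exp_neg_mul ha, integral_exp_neg_mul hu0]
    rw [setIntegral_congr_fun measurableSet_Ioc hper]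
    rw [← intervalIntegral.integral_of_le hab]
    have hin : IntervalIntegrable (fun u : ℝ => u⁻¹) volume a b := by
      apply intervalIntegral.intervalIntegrable_inv
      · intro x hx
        rcases hx with ⟨h1, h2⟩
        rw [min_eq_left hab] at h1
        exact ne_of_gt (lt_of_lt_of_le ha h1)
      · exact continuousOn_id
    rw [intervalIntegral.integral_sub (intervalIntegrable_const (c := a⁻¹)) hin,
      intervalIntegral.integral_const, integral_inv (by
        intro hx
        rcases hx with ⟨h1, h2⟩
        rw [min_eq_left hab] at h1
        exact absurd h1 (not_le.2 ha))]
    rw [show b - a = 1 by rw [hadef, hbdef]; ring, one_smul,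
      Real.log_div hb.ne' ha.ne', hadef, hbdef]
  rw [← hLHS, hswap, hRHS]


lemma hh_meas : Measurable hh := by
  unfold hh
  apply Measurable.ite (measurableSet_le measurable_id measurable_const) measurable_const
  exact ((Real.measurable_exp.sub measurable_const).inv).sub
    ((Real.measurable_exp.comp measurable_id.neg).div measurable_id)

lemma hh_le_two_exp {t : ℝ} (ht : 0 < t) : hh t ≤ 2 * Real.exp (-t) := by
  have he1 : (2:ℝ) ≤ Real.exp 1 := by
    have := Real.add_one_le_exp 1; linarith
  rcases le_or_gt 1 t with h1 | h1
  · have h2 : Real.exp (-t) ≤ Real.exp (-1) := Real.exp_le_exp.2 (by linarith)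
    have h3 : Real.exp (-1) ≤ 1/2 := by
      rw [Real.exp_neg]
      rw [inv_le_comm₀ (Real.exp_pos 1) (by norm_num)]
      norm_num at he1 ⊢
      linarith
    have h4 : hh t ≤ (Real.exp t - 1)⁻¹ := by
      rw [hh_pos_eq ht]
      have : 0 ≤ Real.exp (-t) / t := by positivity
      linarith
    have h5 : (Real.exp t - 1)⁻¹ ≤ 2 * Real.exp (-t) := by
      rw [inv_le_iff_one_le_mul₀ (exp_sub_one_pos ht)]
      have hexp : Real.exp (-t) * Real.exp t = 1 := by
        rw [← Real.exp_add]; simp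
      have h6 : Real.exp (-t) ≤ 1/2 := le_trans h2 h3
      nlinarith [Real.exp_pos (-t)]
    linarith
  · have h2 : Real.exp (-t) ≥ Real.exp (-1) := Real.exp_le_exp.2 (by linarith)
    have h3 : Real.exp (-1) ≥ 1/4 := by
      rw [Real.exp_neg, ge_iff_le, le_inv_comm₀ (by norm_num) (Real.exp_pos 1)]
      have h := Real.exp_one_lt_d9
      norm_num at h ⊢
      linarith
    have := hh_le_half t
    linarith

lemma hh_integrableOn : IntegrableOn hh (Ioi (0:ℝ)) := by
  apply Integrable.mono ((integrableOn_exp_neg_mul one_pos).const_mul 2)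
    (hh_meas.aestronglyMeasurable.restrict)
  rw [ae_restrict_iff' measurableSet_Ioi]
  filter_upwards with t ht
  rw [Real.norm_eq_abs, abs_of_nonneg (hh_nonneg t), Real.norm_eq_abs]
  rw [abs_of_nonneg (by positivity)]
  simpa [one_mul] using hh_le_two_exp ht

lemma hasSum_gg {t : ℝ} (ht : 0 < t) : HasSum (fun m => gg m t) (hh t) := by
  have h := (hasSum_exp_mul_good ht).mul_right (1 - (1 - Real.exp (-t))/t)
  have hval : (Real.exp t - 1)⁻¹ * (1 - (1 - Real.exp (-t))/t) = hh t := by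
    rw [hh_pos_eq ht, Real.exp_neg]
    have hE := exp_sub_one_pos ht
    have hE0 : (0:ℝ) < Real.exp t := Real.exp_pos t
    field_simp
  rwa [hval] at h

lemma c_nonneg (m : ℕ) :
    0 ≤ ((m:ℝ)+1)⁻¹ - (Real.log ((m:ℝ)+2) - Real.log ((m:ℝ)+1)) := by
  have hpos : (0:ℝ) < ((m:ℝ)+2)/((m:ℝ)+1) := by positivity
  have h := Real.log_le_sub_one_of_pos hpos
  rw [Real.log_div (by positivity) (by positivity)] at h
  have heq : ((m:ℝ)+2)/((m:ℝ)+1) - 1 = ((m:ℝ)+1)⁻¹ := by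
    rw [div_sub_one (by positivity)]
    norm_num
  rw [heq] at h
  linarith

lemma partial_sum_c (n : ℕ) :
    ∑ m ∈ Finset.range n, (((m:ℝ)+1)⁻¹ - (Real.log ((m:ℝ)+2) - Real.log ((m:ℝ)+1)))
      = Real.eulerMascheroniSeq n := by
  rw [Finset.sum_sub_distrib]
  have h1 : ∑ m ∈ Finset.range n, ((m:ℝ)+1)⁻¹ = ((harmonic n : ℚ) : ℝ) := by
    rw [harmonic]
    push_cast
    rfl
  have h2 : ∑ m ∈ Finset.range n, (Real.log ((m:ℝ)+2) - Real.log ((m:ℝ)+1))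
      = Real.log ((n:ℝ)+1) := by
    have := Finset.sum_range_sub (fun i => Real.log ((i:ℝ)+1)) n
    simp only [Nat.cast_zero, zero_add, Real.log_one, sub_zero] at this
    rw [← this]
    apply Finset.sum_congr rfl
    intro m _
    congr 2
    push_cast
    ring
  rw [h1, h2, Real.eulerMascheroniSeq]

lemma hasSum_c : HasSum (fun m : ℕ => ((m:ℝ)+1)⁻¹ - (Real.log ((m:ℝ)+2) - Real.log ((m:ℝ)+1)))
    Real.eulerMascheroniConstant := by
  have hsummable : Summable (fun m : ℕ => ((m:ℝ)+1)⁻¹ - (Real.log ((m:ℝ)+2) - Real.log ((m:ℝ)+1))) := by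
    apply summable_of_sum_range_le c_nonneg
    intro n
    rw [partial_sum_c]
    have h1 := Real.eulerMascheroniSeq_lt_eulerMascheroniConstant n
    have h2 := Real.eulerMascheroniConstant_lt_two_thirds
    linarith
  have htend := hsummable.hasSum.tendsto_sum_nat
  have htend2 : Tendsto (fun n => ∑ m ∈ Finset.range n,
      (((m:ℝ)+1)⁻¹ - (Real.log ((m:ℝ)+2) - Real.log ((m:ℝ)+1)))) atTop
      (nhds Real.eulerMascheroniConstant) := by
    apply Real.tendsto_eulerMascheroniSeq.congr
    intro n
    exact (partial_sum_c n).symm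
  have heq : (∑' m : ℕ, (((m:ℝ)+1)⁻¹ - (Real.log ((m:ℝ)+2) - Real.log ((m:ℝ)+1))))
      = Real.eulerMascheroniConstant := tendsto_nhds_unique htend htend2
  exact heq ▸ hsummable.hasSum

lemma integral_hh : ∫ t in Ioi (0:ℝ), hh t = Real.eulerMascheroniConstant := by
  have hcongr : ∫ t in Ioi (0:ℝ), hh t = ∫ t in Ioi (0:ℝ), (∑' m, gg m t) := by
    apply integral_congr_ae
    filter_upwards [ae_restrict_mem measurableSet_Ioi] with t ht
    exact ((hasSum_gg ht).tsum_eq).symm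
  rw [hcongr]
  have key := MeasureTheory.integral_tsum
    (μ := volume.restrict (Ioi (0:ℝ))) (f := fun m t => gg m t)
    (fun m => (gg_meas m).aestronglyMeasurable.restrict) ?_
  · rw [key]
    have : ∀ m : ℕ, ∫ t in Ioi (0:ℝ), gg m t
        = ((m:ℝ)+1)⁻¹ - (Real.log ((m:ℝ)+2) - Real.log ((m:ℝ)+1)) := integral_gg
    rw [tsum_congr this]
    exact hasSum_c.tsum_eq
  · have heach : ∀ m : ℕ, ∫⁻ t in Ioi (0:ℝ), ‖gg m t‖ₑ
        = ENNReal.ofReal (((m:ℝ)+1)⁻¹ - (Real.log ((m:ℝ)+2) - Real.log ((m:ℝ)+1))) := by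
      intro m
      have hnn : 0 ≤ᵐ[volume.restrict (Ioi (0:ℝ))] gg m := by
        filter_upwards [ae_restrict_mem measurableSet_Ioi] with t ht
        exact gg_nonneg ht
      rw [← integral_gg m,
        ofReal_integral_eq_lintegral_ofReal (gg_integrableOn m) hnn]
      apply lintegral_congr_ae
      filter_upwards [ae_restrict_mem measurableSet_Ioi] with t ht
      exact Real.enorm_eq_ofReal (gg_nonneg ht)
    rw [tsum_congr heach,
      ← ENNReal.ofReal_tsum_of_nonneg c_nonneg hasSum_c.summable]
    exact ENNReal.ofReal_ne_top



lemma one_sub_exp_neg_le' (t : ℝ) : 1 - Real.exp (-t) ≤ t := by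
  have := Real.add_one_le_exp (-t); linarith

section comparison
variable {α : ℝ}

lemma H_anti (hα : 0 < α) (N : ℕ) : AntitoneOn (fun x : ℝ => hh (α * x)) (Icc (0:ℝ) (0 + N)) := by
  intro x hx y hy hxy
  exact hh_antitoneOn (mem_Ici.2 (mul_nonneg hα.le hx.1))
    (mem_Ici.2 (mul_nonneg hα.le hy.1))
    (mul_le_mul_of_nonneg_left hxy hα.le)

lemma interval_integral_H (hα : 0 < α) (N : ℕ) :
    ∫ x in (0:ℝ)..(N:ℝ), hh (α * x) = α⁻¹ * ∫ t in (0:ℝ)..(α * N), hh t := by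
  rw [intervalIntegral.integral_comp_mul_left hh hα.ne']
  simp [mul_zero]

lemma interval_integral_hh_le (b : ℝ) (hb : 0 ≤ b) :
    ∫ t in (0:ℝ)..b, hh t ≤ Real.eulerMascheroniConstant := by
  rw [← integral_hh, intervalIntegral.integral_of_le hb]
  apply setIntegral_mono_set hh_integrableOn
  · filter_upwards [ae_restrict_mem measurableSet_Ioi] with t ht
    exact hh_nonneg t
  · exact Filter.Eventually.of_forall fun x hx => Ioc_subset_Ioi_self hx

lemma partial_sum_le (hα : 0 < α) (N : ℕ) :
    ∑ i ∈ Finset.range N, hh (((i:ℝ)+1)*α) ≤ α⁻¹ * Real.eulerMascheroniConstant := by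
  have h := (H_anti hα N).sum_le_integral
  simp only [zero_add] at h
  have heq : ∀ i : ℕ, hh (α * ((0:ℝ) + ((i:ℕ)+1 : ℕ))) = hh (((i:ℝ)+1)*α) := by
    intro i; congr 1; push_cast; ring
  calc ∑ i ∈ Finset.range N, hh (((i:ℝ)+1)*α)
      = ∑ i ∈ Finset.range N, hh (α * ((0:ℝ) + ((i:ℕ)+1 : ℕ))) :=
        Finset.sum_congr rfl fun i _ => (heq i).symm
    _ ≤ ∫ x in (0:ℝ)..(N:ℝ), hh (α * x) := by
        simpa using h
    _ = α⁻¹ * ∫ t in (0:ℝ)..(α * N), hh t := interval_integral_H hα N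
    _ ≤ α⁻¹ * Real.eulerMascheroniConstant := by
        apply mul_le_mul_of_nonneg_left
          (interval_integral_hh_le (α * N) (by positivity)) (by positivity)

lemma summable_B (hα : 0 < α) : Summable (fun d : ℕ => hh (((d:ℝ)+1)*α)) :=
  summable_of_sum_range_le (fun d => hh_nonneg _) (partial_sum_le hα)

lemma tsum_B_le (hα : 0 < α) :
    ∑' d : ℕ, hh (((d:ℝ)+1)*α) ≤ α⁻¹ * Real.eulerMascheroniConstant :=
  Summable.tsum_le_of_sum_range_le (summable_B hα) (partial_sum_le hα)

lemma le_tsum_B (hα : 0 < α) :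
    α⁻¹ * Real.eulerMascheroniConstant ≤ 1/2 + ∑' d : ℕ, hh (((d:ℝ)+1)*α) := by
  have hlim : Tendsto (fun N : ℕ => α⁻¹ * ∫ t in (0:ℝ)..(α * ((N:ℝ)+1)), hh t) atTop
      (nhds (α⁻¹ * Real.eulerMascheroniConstant)) := by
    rw [← integral_hh]
    apply Tendsto.const_mul
    apply MeasureTheory.intervalIntegral_tendsto_integral_Ioi 0 hh_integrableOn
    apply Tendsto.const_mul_atTop hα
    exact tendsto_atTop_add_const_right atTop 1 tendsto_natCast_atTop_atTop
  apply le_of_tendsto hlim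
  filter_upwards with N
  have h := (H_anti hα (N+1)).integral_le_sum
  simp only [zero_add] at h
  have hcast : ((N+1 : ℕ) : ℝ) = (N:ℝ)+1 := by push_cast; ring
  calc α⁻¹ * ∫ t in (0:ℝ)..(α * ((N:ℝ)+1)), hh t
      = ∫ x in (0:ℝ)..((N+1:ℕ):ℝ), hh (α * x) := by
        rw [interval_integral_H hα (N+1), hcast]
    _ ≤ ∑ i ∈ Finset.range (N+1), hh (α * (i:ℝ)) := by
        simpa using h
    _ = ∑ i ∈ Finset.range N, hh (α * ((i:ℝ)+1)) + hh 0 := by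
        rw [Finset.sum_range_succ' (fun i => hh (α * (i:ℝ))) N]
        simp only [Nat.cast_zero, mul_zero]
        congr 1
        apply Finset.sum_congr rfl
        intro i _
        congr 1
        push_cast; ring
    _ ≤ 1/2 + ∑' d : ℕ, hh (((d:ℝ)+1)*α) := by
        rw [hh_zero]
        have hle : ∑ i ∈ Finset.range N, hh (α * ((i:ℝ)+1))
            ≤ ∑' d : ℕ, hh (((d:ℝ)+1)*α) := by
          have : ∀ i : ℕ, hh (α * ((i:ℝ)+1)) = hh (((i:ℝ)+1)*α) := by
            intro i; rw [mul_comm]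
          rw [Finset.sum_congr rfl fun i _ => this i]
          exact Summable.sum_le_tsum _ (fun i _ => hh_nonneg _) (summable_B hα)
        linarith
end comparison

lemma hasSum_A {α : ℝ} (hα : 0 < α) :
    HasSum (fun d : ℕ => Real.exp (-(((d:ℝ)+1)*α)) / (((d:ℝ)+1)*α))
      (-Real.log (1 - Real.exp (-α)) * α⁻¹) := by
  have hx0 : 0 < Real.exp (-α) := Real.exp_pos _
  have hx1 : Real.exp (-α) < 1 := Real.exp_lt_one_iff.2 (by linarith)
  have habs : |Real.exp (-α)| < 1 := by rw [abs_of_pos hx0]; exact hx1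
  have h := (hasSum_pow_div_log_of_abs_lt_one habs).mul_right α⁻¹
  have hfun : (fun i : ℕ => Real.exp (-α) ^ (i + 1) / ((i:ℝ) + 1) * α⁻¹)
      = fun d : ℕ => Real.exp (-(((d:ℝ)+1)*α)) / (((d:ℝ)+1)*α) := by
    funext d
    have hxp : Real.exp (-α) ^ (d + 1) = Real.exp (-(((d:ℝ)+1)*α)) := by
      rw [← Real.exp_nat_mul]
      congr 1
      push_cast
      ring
    rw [hxp, div_eq_mul_inv, mul_assoc, ← mul_inv, ← div_eq_mul_inv]
  rwa [hfun] at h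

lemma tsum_T {α : ℝ} (hα : 0 < α) :
    ∑' d : ℕ, (Real.exp (((d:ℝ)+1)*α) - 1)⁻¹
      = -Real.log (1 - Real.exp (-α)) * α⁻¹ + ∑' d : ℕ, hh (((d:ℝ)+1)*α) := by
  rw [← (hasSum_A hα).tsum_eq,
    ← Summable.tsum_add (hasSum_A hα).summable (summable_B hα)]
  apply tsum_congr
  intro d
  have ht : 0 < ((d:ℝ)+1)*α := by positivity
  rw [hh_pos_eq ht]
  ring

lemma log_piece {α : ℝ} (hα : 0 < α) (hα1 : α ≤ 1) :
    |(-Real.log (1 - Real.exp (-α))) - Real.log α⁻¹| ≤ α := by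
  set x := Real.exp (-α) with hxdef
  have hx0 : 0 < x := Real.exp_pos _
  have h1 : 1 - x ≤ α := one_sub_exp_neg_le' α
  have h2 : α - α^2/2 ≤ 1 - x := by
    have := taylor2 α hα.le; rw [hxdef]; linarith
  have h3 : 0 < 1 - x := by nlinarith
  have heq : -Real.log (1 - x) - Real.log α⁻¹ = -Real.log ((1-x)/α) := by
    rw [Real.log_div (ne_of_gt h3) (ne_of_gt hα), Real.log_inv]; ring
  rw [heq, abs_le]
  constructor
  · rw [neg_le_neg_iff]
    have hle1 : (1-x)/α ≤ 1 := by rw [div_le_one hα]; exact h1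
    have := Real.log_nonpos (by positivity) hle1
    linarith
  · rw [neg_le]
    have hxe : x * Real.exp α = 1 := by rw [hxdef, ← Real.exp_add]; simp
    have hea := Real.add_one_le_exp α
    have h5 : x * α ≤ 1 - x := by nlinarith
    have h6 : x ≤ (1-x)/α := by rw [le_div_iff₀ hα]; exact h5
    have := (Real.le_log_iff_exp_le (by positivity : (0:ℝ) < (1-x)/α)).2 (by rw [hxdef] at h6 ⊢; exact h6)
    linarith

theorem stmt_7 :
    (fun α : ℝ =>
        (∑' k : ℕ, (((k + 1).divisors.card : ℝ)) * Real.exp (-(((k : ℝ) + 1) * α)))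
          - (α⁻¹ * Real.log α⁻¹ + Real.eulerMascheroniConstant * α⁻¹))
      =O[nhdsWithin 0 (Set.Ioi 0)] (fun _ : ℝ => (1 : ℝ)) := by
  rw [isBigO_iff]
  refine ⟨2, ?_⟩
  filter_upwards [Ioc_mem_nhdsGT_of_mem (by norm_num : (0:ℝ) ∈ Ico (0:ℝ) 1)] with α hmem
  obtain ⟨hα, hα1⟩ := hmem
  rw [rearrange hα, tsum_T hα]
  have hB1 := tsum_B_le hα
  have hB2 := le_tsum_B hα
  have hlog := log_piece hα hα1
  set B := ∑' d : ℕ, hh (((d:ℝ)+1)*α) with hBdef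
  set L := -Real.log (1 - Real.exp (-α)) with hLdef
  have hsplit : L * α⁻¹ + B - (α⁻¹ * Real.log α⁻¹ + Real.eulerMascheroniConstant * α⁻¹)
      = (L - Real.log α⁻¹) * α⁻¹ + (B - α⁻¹ * Real.eulerMascheroniConstant) := by
    ring
  rw [hsplit]
  have hb1 : |(L - Real.log α⁻¹) * α⁻¹| ≤ 1 := by
    rw [abs_mul, abs_of_pos (by positivity : (0:ℝ) < α⁻¹)]
    calc |L - Real.log α⁻¹| * α⁻¹ ≤ α * α⁻¹ :=
          mul_le_mul_of_nonneg_right hlog (by positivity)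
      _ = 1 := by field_simp
  have hb2 : |B - α⁻¹ * Real.eulerMascheroniConstant| ≤ 1/2 := by
    rw [abs_le]
    constructor <;> linarith
  rw [Real.norm_eq_abs, norm_one, mul_one]
  calc |(L - Real.log α⁻¹) * α⁻¹ + (B - α⁻¹ * Real.eulerMascheroniConstant)|
      ≤ |(L - Real.log α⁻¹) * α⁻¹| + |B - α⁻¹ * Real.eulerMascheroniConstant| := abs_add_le _ _
    _ ≤ 2 := by linarith
end

section
/- Fix integers m ≥ 1 and 1 ≤ h ≤ m−1, and let ω = e^{2πi/m}. Then γ_{m,h} = (1/m) Σ_{ℓ=1}^{m−1} ω^{−hℓ} log(1/(1 − ω^ℓ)) equals the real number (1/m)[ (π/2) cot(hπ/m) + log 2 − 2 Σ_{0 < k < m/2} cos(2hkπ/m) · log sin(kπ/m) ]. -/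
open Complex Finset

section helpers

lemma aux_log (θ : ℝ) (h0 : 0 < θ) (h2 : θ < 2 * Real.pi) :
    Complex.log (1 / (1 - Complex.exp (θ * I))) =
      -(Real.log (2 * Real.sin (θ / 2)) : ℂ) - ((θ / 2 - Real.pi / 2 : ℝ) : ℂ) * I := by
  have hpi := Real.pi_pos
  have hs : 0 < Real.sin (θ / 2) :=
    Real.sin_pos_of_pos_of_lt_pi (by linarith) (by linarith)
  have key : 1 - Complex.exp (θ * I) =
      Complex.exp ((Real.log (2 * Real.sin (θ / 2)) : ℂ)
        + ((θ / 2 - Real.pi / 2 : ℝ) : ℂ) * I) := by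
    rw [Complex.exp_add, ← Complex.ofReal_exp, Real.exp_log (by positivity),
      Complex.exp_mul_I, Complex.exp_mul_I]
    rw [← Complex.ofReal_cos, ← Complex.ofReal_sin, ← Complex.ofReal_cos,
      ← Complex.ofReal_sin]
    rw [Complex.ext_iff]
    constructor
    · simp only [Complex.sub_re, Complex.add_re, Complex.one_re, Complex.mul_re,
        Complex.ofReal_re, Complex.ofReal_im, Complex.I_re, Complex.I_im,
        Complex.add_im, Complex.mul_im, Complex.sub_im, Complex.one_im]
      rw [Real.cos_sub_pi_div_two]
      have h1 := Real.cos_two_mul (θ/2)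
      rw [show 2*(θ/2) = θ by ring] at h1
      have h2 := Real.sin_sq_add_cos_sq (θ/2)
      nlinarith
    · simp only [Complex.sub_re, Complex.add_re, Complex.one_re, Complex.mul_re,
        Complex.ofReal_re, Complex.ofReal_im, Complex.I_re, Complex.I_im,
        Complex.add_im, Complex.mul_im, Complex.sub_im, Complex.one_im]
      rw [Real.sin_sub_pi_div_two]
      have h1 := Real.sin_two_mul (θ/2)
      rw [show 2*(θ/2) = θ by ring] at h1
      nlinarith
  rw [key, one_div, ← Complex.exp_neg, Complex.log_exp]
  · ring
  · simp only [neg_add_rev, Complex.add_im, Complex.neg_im, Complex.mul_im,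
      Complex.ofReal_re, Complex.ofReal_im, Complex.I_re, Complex.I_im]
    nlinarith
  · simp only [neg_add_rev, Complex.add_im, Complex.neg_im, Complex.mul_im,
      Complex.ofReal_re, Complex.ofReal_im, Complex.I_re, Complex.I_im]
    nlinarith

lemma aux_geom (z : ℂ) (n : ℕ) :
    (z - 1) * ∑ ℓ ∈ Finset.range n, (ℓ : ℂ) * z ^ ℓ
      = ((n : ℂ) - 1) * z ^ n + 1 - ∑ ℓ ∈ Finset.range n, z ^ ℓ := by
  induction n with
  | zero => simp
  | succ n ih =>
    rw [Finset.sum_range_succ, Finset.sum_range_succ, mul_add, ih]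
    push_cast
    ring

lemma aux_split_s18 (m : ℕ) (hm : 1 ≤ m) (f : ℕ → ℂ) :
    ∑ ℓ ∈ Finset.range m, f ℓ = f 0 + ∑ ℓ ∈ Finset.Icc 1 (m-1), f ℓ := by
  have h1 : Finset.Icc 1 (m-1) = Finset.Ico 1 m := by ext x; simp; omega
  rw [h1, Finset.range_eq_Ico, ← Finset.sum_Ico_consecutive _ (Nat.zero_le 1) hm]
  simp

lemma aux_cot (a : ℝ) (ha0 : 0 < a) (hapi : a < Real.pi)
    (hz1 : Complex.exp (-(2*a) * I) ≠ 1) :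
    1 / (Complex.exp (-(2*a) * I) - 1) + 1/2
      = I * ((Real.cos a / Real.sin a : ℝ) : ℂ) / 2 := by
  have hsa : Real.sin a ≠ 0 := (Real.sin_pos_of_pos_of_lt_pi ha0 hapi).ne'
  have hsa' : ((Real.sin a : ℝ) : ℂ) ≠ 0 := by exact_mod_cast hsa
  have hz : Complex.exp (-(2*a) * I) - 1 ≠ 0 := sub_ne_zero.mpr hz1
  have hex : Complex.exp (-(2*(a:ℝ):ℂ) * I)
      = ((Real.cos (2*a) : ℝ) : ℂ) - ((Real.sin (2*a) : ℝ) : ℂ) * I := by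
    rw [Complex.exp_mul_I, Complex.cos_neg, Complex.sin_neg,
      show (2*(a:ℝ):ℂ) = ((2*a:ℝ):ℂ) by push_cast; ring,
      ← Complex.ofReal_cos, ← Complex.ofReal_sin]
    ring
  have hc2 := Real.cos_two_mul a
  have hs2 := Real.sin_two_mul a
  have hsc := Real.sin_sq_add_cos_sq a
  set c2 := Real.cos (2*a) with hc2d
  set s2 := Real.sin (2*a) with hs2d
  set ca := Real.cos a with hcad
  set sa := Real.sin a with hsad
  rw [hex] at hz ⊢
  field_simp
  rw [Complex.ext_iff]
  constructor <;>
    simp only [Complex.add_re, Complex.add_im, Complex.mul_re, Complex.mul_im,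
      Complex.sub_re, Complex.sub_im, Complex.one_re, Complex.one_im, Complex.I_re,
      Complex.I_im, Complex.ofReal_re, Complex.ofReal_im, Complex.re_ofNat, Complex.im_ofNat]
  · rw [hc2, hs2]; field_simp; ring
  · rw [hc2, hs2]; field_simp; linear_combination (-2*ca)*hsc

lemma aux_reflect {M : Type*} [AddCommMonoid M] (m : ℕ) (f : ℕ → M) :
    ∑ ℓ ∈ Finset.Icc 1 (m-1), f ℓ = ∑ ℓ ∈ Finset.Icc 1 (m-1), f (m - ℓ) := by
  refine Finset.sum_nbij' (fun ℓ => m - ℓ) (fun ℓ => m - ℓ) ?_ ?_ ?_ ?_ ?_ <;>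
    simp only [Finset.mem_Icc] <;> intro a ha
  · omega
  · omega
  · omega
  · omega
  · congr 1; omega

lemma aux_half (m : ℕ) (g : ℕ → ℝ) (hsym : ∀ ℓ ∈ Finset.Icc 1 (m-1), g (m - ℓ) = g ℓ)
    (hmid : ∀ ℓ, 2 * ℓ = m → g ℓ = 0) :
    ∑ ℓ ∈ Finset.Icc 1 (m-1), g ℓ
      = 2 * ∑ k ∈ (Finset.Ioo 0 m).filter (fun k => 2 * k < m), g k := by
  have hIcc : Finset.Icc 1 (m-1) = Finset.Ioo 0 m := by ext x; simp; omega
  rw [hIcc, ← Finset.sum_filter_add_sum_filter_not (Finset.Ioo 0 m) (fun k => 2 * k < m),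
    ← Finset.sum_filter_add_sum_filter_not
      ((Finset.Ioo 0 m).filter (fun k => ¬ 2 * k < m)) (fun k => 2 * k = m)]
  have h1 : ∑ k ∈ (((Finset.Ioo 0 m).filter (fun k => ¬ 2 * k < m)).filter
      (fun k => 2 * k = m)), g k = 0 := by
    apply Finset.sum_eq_zero
    intro k hk
    simp only [Finset.mem_filter] at hk
    exact hmid k hk.2
  have h2 : ∑ k ∈ (((Finset.Ioo 0 m).filter (fun k => ¬ 2 * k < m)).filter
      (fun k => ¬ 2 * k = m)), g k
      = ∑ k ∈ (Finset.Ioo 0 m).filter (fun k => 2 * k < m), g k := by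
    refine Finset.sum_nbij' (fun k => m - k) (fun k => m - k) ?_ ?_ ?_ ?_ ?_ <;>
      simp only [Finset.mem_filter, Finset.mem_Ioo] <;> intro a ha
    · omega
    · omega
    · omega
    · omega
    · exact (hsym a (by simp only [Finset.mem_Icc]; omega)).symm
  rw [h1, h2]
  ring
end helpers

theorem stmt_18 (m h : ℕ) (hm : 1 ≤ m) (hh1 : 1 ≤ h) (hhm : h ≤ m - 1) :
    (1 / (m : ℂ)) * ∑ ℓ ∈ Finset.Icc 1 (m - 1),
        (Complex.exp (2 * Real.pi * Complex.I / m)) ^ (-((h : ℤ) * ℓ)) *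
          Complex.log (1 / (1 - (Complex.exp (2 * Real.pi * Complex.I / m)) ^ (ℓ : ℕ)))
      = (((1 / (m : ℝ)) *
          ((Real.pi / 2) * Real.cot ((h : ℝ) * Real.pi / m) + Real.log 2
            - 2 * ∑ k ∈ (Finset.Ioo 0 m).filter (fun k => 2 * k < m),
                Real.cos (2 * (h : ℝ) * k * Real.pi / m) *
                  Real.log (Real.sin ((k : ℝ) * Real.pi / m)) : ℝ)) : ℂ) := by
  have hm2 : 2 ≤ m := by omega
  have hpi := Real.pi_pos
  have hmR : (0:ℝ) < m := by exact_mod_cast (by omega : 0 < m)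
  have hm0 : (m:ℝ) ≠ 0 := hmR.ne'
  have hmC : (m:ℂ) ≠ 0 := Nat.cast_ne_zero.mpr (by omega)
  set a : ℝ := (h:ℝ) * Real.pi / m with ha
  have hhR : (0:ℝ) < h := by exact_mod_cast hh1
  have hhmR : (h:ℝ) < m := by exact_mod_cast (by omega : h < m)
  have ha0 : 0 < a := by rw [ha]; positivity
  have hapi : a < Real.pi := by
    rw [ha, div_lt_iff₀ hmR]
    nlinarith
  set z : ℂ := Complex.exp (-(2*a) * I) with hzdef
  -- z ≠ 1
  have hz1 : z ≠ 1 := by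
    rw [hzdef]
    intro hz
    rw [Complex.exp_eq_one_iff] at hz
    obtain ⟨n, hn⟩ := hz
    have him := congrArg Complex.im hn
    simp only [Complex.mul_im, Complex.neg_im, Complex.neg_re, Complex.I_im, Complex.I_re,
      Complex.ofReal_re, Complex.ofReal_im, Complex.mul_re, Complex.intCast_re,
      Complex.intCast_im, Complex.re_ofNat, Complex.im_ofNat] at him
    -- him should say : -(2*a) = n * (2*π)
    have hcast : ((2:ℂ)*(a:ℂ)).im = 0 := by simp
    have key : (h:ℝ) = (-n : ℤ) * m := by
      rw [ha] at him
      push_cast at him ⊢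
      field_simp at him
      nlinarith [him, Real.pi_pos]
    have hdvd : (m:ℤ) ∣ (h:ℤ) := ⟨-n, by exact_mod_cast key.trans (mul_comm ((-n:ℤ):ℝ) (m:ℝ))⟩
    have hle := Int.le_of_dvd (by exact_mod_cast hh1) hdvd
    omega
  have hzm : z ^ m = 1 := by
    rw [hzdef, ← Complex.exp_nat_mul]
    rw [show (m:ℂ) * (-(2*(a:ℝ):ℂ) * I) = ((-h : ℤ) : ℂ) * (2*Real.pi*I) by
      rw [ha]; push_cast; field_simp]
    exact Complex.exp_int_mul_two_pi_mul_I _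
  have hgeo0 : ∑ ℓ ∈ Finset.range m, z ^ ℓ = 0 := by
    have hgs := geom_sum_mul z m
    rw [hzm, sub_self] at hgs
    rcases mul_eq_zero.mp hgs with h' | h'
    · exact h'
    · exact absurd (sub_eq_zero.mp h') hz1
  have hsum1 : ∑ ℓ ∈ Finset.Icc 1 (m-1), z ^ ℓ = -1 := by
    have hs := aux_split_s18 m (by omega) (fun ℓ => z ^ ℓ)
    rw [hgeo0] at hs
    simp only [pow_zero] at hs
    linear_combination -hs
  have hsum2 : ∑ ℓ ∈ Finset.Icc 1 (m-1), (ℓ:ℂ) * z ^ ℓ = m / (z - 1) := by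
    have hg := aux_geom z m
    rw [hzm, hgeo0] at hg
    have hs := aux_split_s18 m (by omega) (fun ℓ => (ℓ:ℂ) * z ^ ℓ)
    simp only [Nat.cast_zero, zero_mul, zero_add, pow_zero] at hs
    rw [eq_div_iff (sub_ne_zero.mpr hz1)]
    rw [hs] at hg
    linear_combination hg
  -- term rewrite
  have hterm : ∀ ℓ ∈ Finset.Icc 1 (m-1),
      (Complex.exp (2 * Real.pi * Complex.I / m)) ^ (-((h : ℤ) * ℓ)) *
          Complex.log (1 / (1 - (Complex.exp (2 * Real.pi * Complex.I / m)) ^ (ℓ : ℕ)))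
        = z ^ ℓ * (-(Real.log (2 * Real.sin ((ℓ:ℝ)*Real.pi/m)) : ℂ)
            - (((ℓ:ℝ)*Real.pi/m - Real.pi/2 : ℝ) : ℂ) * I) := by
    intro ℓ hℓ
    simp only [Finset.mem_Icc] at hℓ
    have hℓ0 : (0:ℝ) < ℓ := by exact_mod_cast (by omega : 0 < ℓ)
    have hℓm : (ℓ:ℝ) < m := by exact_mod_cast (by omega : ℓ < m)
    have hE : (Complex.exp (2 * Real.pi * Complex.I / m)) ^ (-((h : ℤ) * ℓ)) = z ^ ℓ := by
      rw [hzdef, ← Complex.exp_nat_mul, ← Complex.exp_int_mul]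
      congr 1
      rw [ha]
      push_cast
      ring
    have harg : (Complex.exp (2 * Real.pi * Complex.I / m)) ^ (ℓ : ℕ)
        = Complex.exp (((2*Real.pi*ℓ/m : ℝ)) * I) := by
      rw [← Complex.exp_nat_mul]
      congr 1
      push_cast
      ring
    rw [hE, harg, aux_log (2*Real.pi*ℓ/m) (by positivity)
      (by rw [div_lt_iff₀ hmR]; nlinarith),
      show 2*Real.pi*(ℓ:ℝ)/m/2 = (ℓ:ℝ)*Real.pi/m by ring]
  rw [Finset.sum_congr rfl hterm]
  -- split the sum
  have hsplit2 : ∑ ℓ ∈ Finset.Icc 1 (m-1), z ^ ℓ *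
        (-(Real.log (2 * Real.sin ((ℓ:ℝ)*Real.pi/m)) : ℂ)
          - (((ℓ:ℝ)*Real.pi/m - Real.pi/2 : ℝ) : ℂ) * I)
      = -(∑ ℓ ∈ Finset.Icc 1 (m-1), z ^ ℓ * (Real.log (2 * Real.sin ((ℓ:ℝ)*Real.pi/m)) : ℂ))
        - (∑ ℓ ∈ Finset.Icc 1 (m-1), z ^ ℓ * (((ℓ:ℝ)*Real.pi/m - Real.pi/2 : ℝ) : ℂ)) * I := by
    rw [Finset.sum_mul, ← Finset.sum_neg_distrib, ← Finset.sum_sub_distrib]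
    apply Finset.sum_congr rfl
    intro ℓ _
    ring
  rw [hsplit2]
  -- the imaginary-type part
  have hd : ∑ ℓ ∈ Finset.Icc 1 (m-1), z ^ ℓ * (((ℓ:ℝ)*Real.pi/m - Real.pi/2 : ℝ) : ℂ)
      = I * Real.pi * ((Real.cos a / Real.sin a : ℝ) : ℂ) / 2 := by
    have hpt : ∀ ℓ ∈ Finset.Icc 1 (m-1),
        z ^ ℓ * (((ℓ:ℝ)*Real.pi/m - Real.pi/2 : ℝ) : ℂ)
          = ((Real.pi:ℂ)/m) * ((ℓ:ℂ) * z ^ ℓ) - ((Real.pi:ℂ)/2) * z ^ ℓ := by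
      intro ℓ _
      push_cast
      ring
    rw [Finset.sum_congr rfl hpt, Finset.sum_sub_distrib, ← Finset.mul_sum, ← Finset.mul_sum,
      hsum2, hsum1]
    have hcot := aux_cot a ha0 hapi hz1
    rw [show (Real.pi:ℂ)/m * ((m:ℂ)/(z-1)) = (Real.pi:ℂ) * (1/(z-1)) by field_simp]
    linear_combination (Real.pi:ℂ) * hcot
  rw [hd]
  -- the real-type part
  have hsinpos : ∀ ℓ ∈ Finset.Icc 1 (m-1), 0 < Real.sin ((ℓ:ℝ)*Real.pi/m) := by
    intro ℓ hℓ
    simp only [Finset.mem_Icc] at hℓ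
    have hℓ0 : (0:ℝ) < ℓ := by exact_mod_cast (by omega : 0 < ℓ)
    have hℓm : (ℓ:ℝ) < m := by exact_mod_cast (by omega : ℓ < m)
    apply Real.sin_pos_of_pos_of_lt_pi
    · positivity
    · rw [div_lt_iff₀ hmR]; nlinarith
  have hzpow : ∀ ℓ : ℕ, z ^ ℓ = Complex.exp ((-(2*(h:ℝ)*ℓ*Real.pi/m) : ℝ) * I) := by
    intro ℓ
    rw [hzdef, ← Complex.exp_nat_mul]
    congr 1
    rw [ha]
    push_cast
    ring
  have hzinv : ∀ ℓ ∈ Finset.Icc 1 (m-1), z ^ (m - ℓ) = (z ^ ℓ)⁻¹ := by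
    intro ℓ hℓ
    simp only [Finset.mem_Icc] at hℓ
    have hp : z ^ (m - ℓ) * z ^ ℓ = 1 := by
      rw [← pow_add, show m - ℓ + ℓ = m by omega, hzm]
    exact eq_inv_of_mul_eq_one_left hp
  have hT : ∑ ℓ ∈ Finset.Icc 1 (m-1), z ^ ℓ * (Real.log (Real.sin ((ℓ:ℝ)*Real.pi/m)) : ℂ)
      = ((∑ ℓ ∈ Finset.Icc 1 (m-1), Real.cos (2*(h:ℝ)*ℓ*Real.pi/m) *
          Real.log (Real.sin ((ℓ:ℝ)*Real.pi/m)) : ℝ) : ℂ) := by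
    have hrefl := aux_reflect m (fun ℓ => z ^ ℓ * (Real.log (Real.sin ((ℓ:ℝ)*Real.pi/m)) : ℂ))
    have hrefl2 : ∑ ℓ ∈ Finset.Icc 1 (m-1),
          z ^ (m - ℓ) * (Real.log (Real.sin (((m - ℓ : ℕ):ℝ)*Real.pi/m)) : ℂ)
        = ∑ ℓ ∈ Finset.Icc 1 (m-1), (z ^ ℓ)⁻¹ * (Real.log (Real.sin ((ℓ:ℝ)*Real.pi/m)) : ℂ) := by
      apply Finset.sum_congr rfl
      intro ℓ hℓ
      have hmem := hℓ
      simp only [Finset.mem_Icc] at hℓ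
      rw [hzinv ℓ hmem]
      congr 2
      rw [Nat.cast_sub (by omega)]
      rw [show ((m:ℝ) - ℓ)*Real.pi/m = Real.pi - (ℓ:ℝ)*Real.pi/m by field_simp]
      rw [Real.sin_pi_sub]
    rw [hrefl2] at hrefl
    have htwo : (2:ℂ) * ∑ ℓ ∈ Finset.Icc 1 (m-1), z ^ ℓ *
          (Real.log (Real.sin ((ℓ:ℝ)*Real.pi/m)) : ℂ)
        = ∑ ℓ ∈ Finset.Icc 1 (m-1), (z ^ ℓ + (z ^ ℓ)⁻¹) *
          (Real.log (Real.sin ((ℓ:ℝ)*Real.pi/m)) : ℂ) := by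
      rw [two_mul]
      nth_rewrite 2 [hrefl]
      rw [← Finset.sum_add_distrib]
      apply Finset.sum_congr rfl
      intro ℓ _
      ring
    have hcospt : ∀ ℓ ∈ Finset.Icc 1 (m-1),
        z ^ ℓ + (z ^ ℓ)⁻¹ = 2 * ((Real.cos (2*(h:ℝ)*ℓ*Real.pi/m) : ℝ) : ℂ) := by
      intro ℓ _
      rw [hzpow ℓ,
        show ((-(2*(h:ℝ)*ℓ*Real.pi/m) : ℝ) : ℂ) * I
            = -((2*(h:ℝ)*ℓ*Real.pi/m : ℝ) : ℂ) * I from by push_cast; ring,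
        ← Complex.exp_neg,
        show -(-((2*(h:ℝ)*ℓ*Real.pi/m : ℝ) : ℂ) * I) = ((2*(h:ℝ)*ℓ*Real.pi/m : ℝ) : ℂ) * I
          from by ring]
      have e := Complex.two_cos (((2*(h:ℝ)*ℓ*Real.pi/m : ℝ)) : ℂ)
      rw [← Complex.ofReal_cos] at e
      linear_combination e.symm
    have htwo2 : (2:ℂ) * ∑ ℓ ∈ Finset.Icc 1 (m-1), z ^ ℓ *
          (Real.log (Real.sin ((ℓ:ℝ)*Real.pi/m)) : ℂ)
        = 2 * ((∑ ℓ ∈ Finset.Icc 1 (m-1), Real.cos (2*(h:ℝ)*ℓ*Real.pi/m) *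
            Real.log (Real.sin ((ℓ:ℝ)*Real.pi/m)) : ℝ) : ℂ) := by
      rw [htwo, Finset.sum_congr rfl (fun ℓ hℓ => by rw [hcospt ℓ hℓ])]
      push_cast
      rw [Finset.mul_sum]
      apply Finset.sum_congr rfl
      intro ℓ _
      ring
    have := mul_left_cancel₀ (two_ne_zero (α := ℂ)) htwo2
    exact this
  have hc : ∑ ℓ ∈ Finset.Icc 1 (m-1), z ^ ℓ * (Real.log (2 * Real.sin ((ℓ:ℝ)*Real.pi/m)) : ℂ)
      = -(Real.log 2 : ℂ) + ((∑ ℓ ∈ Finset.Icc 1 (m-1), Real.cos (2*(h:ℝ)*ℓ*Real.pi/m) *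
          Real.log (Real.sin ((ℓ:ℝ)*Real.pi/m)) : ℝ) : ℂ) := by
    have hpt : ∀ ℓ ∈ Finset.Icc 1 (m-1),
        z ^ ℓ * (Real.log (2 * Real.sin ((ℓ:ℝ)*Real.pi/m)) : ℂ)
          = (Real.log 2 : ℂ) * z ^ ℓ + z ^ ℓ * (Real.log (Real.sin ((ℓ:ℝ)*Real.pi/m)) : ℂ) := by
      intro ℓ hℓ
      rw [Real.log_mul two_ne_zero (hsinpos ℓ hℓ).ne']
      push_cast
      ring
    rw [Finset.sum_congr rfl hpt, Finset.sum_add_distrib, ← Finset.mul_sum, hsum1, hT]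
    ring
  rw [hc]
  -- half-range reduction of the real sum
  have hhalf : (∑ ℓ ∈ Finset.Icc 1 (m-1), Real.cos (2*(h:ℝ)*ℓ*Real.pi/m) *
        Real.log (Real.sin ((ℓ:ℝ)*Real.pi/m)) : ℝ)
      = 2 * ∑ k ∈ (Finset.Ioo 0 m).filter (fun k => 2 * k < m),
          Real.cos (2 * (h : ℝ) * k * Real.pi / m) *
            Real.log (Real.sin ((k : ℝ) * Real.pi / m)) := by
    apply aux_half
    · intro ℓ hℓ
      simp only [Finset.mem_Icc] at hℓ
      rw [Nat.cast_sub (by omega)]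
      rw [show ((m:ℝ) - ℓ)*Real.pi/m = Real.pi - (ℓ:ℝ)*Real.pi/m by field_simp,
        Real.sin_pi_sub,
        show 2*(h:ℝ)*((m:ℝ) - ℓ)*Real.pi/m = (h:ℝ)*(2*Real.pi) - 2*(h:ℝ)*ℓ*Real.pi/m by
          field_simp]
      rw [show (h:ℝ)*(2*Real.pi) - 2*(h:ℝ)*ℓ*Real.pi/m = (h:ℕ)*(2*Real.pi) - 2*(h:ℝ)*ℓ*Real.pi/m by norm_num,
        Real.cos_nat_mul_two_pi_sub]
    · intro ℓ hℓ
      have hℓ1 : 1 ≤ ℓ := by omega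
      have : (ℓ:ℝ)*Real.pi/m = Real.pi/2 := by
        have : (m:ℝ) = 2*ℓ := by exact_mod_cast hℓ.symm
        rw [this]
        have hℓ0 : (ℓ:ℝ) ≠ 0 := by
          have : (0:ℝ) < ℓ := by exact_mod_cast hℓ1
          exact this.ne'
        field_simp
      rw [this, Real.sin_pi_div_two, Real.log_one, mul_zero]
  rw [hhalf]
  -- final arithmetic
  rw [Real.cot_eq_cos_div_sin]
  push_cast
  linear_combination (-(1/(m:ℂ)) * (Real.pi:ℂ) * (Complex.cos (a:ℂ) / Complex.sin (a:ℂ)) / 2) *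
    Complex.I_sq
end
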